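/- arXiv:1506.09159 — 9 statements merged into one kernel-verified Lean document; each statement's English description precedes it below -/
import Mathlib

section
/- Let q ∈ (0,1), s ∈ (0,1) and x > 0. Then ([x]_q / [x+s]_q)^{1-s} ≤ Γ_q(x+s) / ([x]_q^s · Γ_q(x)) ≤ 1. -/
open Real Filter Finset

/-- Weighted AM-GM consequence. -/
private lemma aux_key {a b t : ℝ} (ha0 : 0 ≤ a) (ha1 : a ≤ 1) (hb0 : 0 ≤ b) (hb1 : b ≤ 1)
    (ht0 : 0 ≤ t) (ht1 : t ≤ 1) :
    (1 - a) ^ (1 - t) * (1 - b) ^ t ≤ 1 - a ^ (1 - t) * b ^ t := by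
  have h1 := Real.geom_mean_le_arith_mean2_weighted (by linarith : (0:ℝ) ≤ 1 - t) ht0 ha0 hb0
    (by ring)
  have h2 := Real.geom_mean_le_arith_mean2_weighted (by linarith : (0:ℝ) ≤ 1 - t) ht0
    (by linarith : (0:ℝ) ≤ 1 - a) (by linarith : (0:ℝ) ≤ 1 - b) (by ring)
  nlinarith [h1, h2]

private lemma aux_tprod_pos {f : ℕ → ℝ} (hf : ∀ n, 0 < f n)
    (h : Summable fun n => Real.log (f n)) :
    Multipliable f ∧ 0 < ∏' n, f n := by
  have hm : Multipliable f :=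
    Real.multipliable_of_summable_log hf h
  refine ⟨hm, ?_⟩
  have := Real.rexp_tsum_eq_tprod hf h
  rw [← this]
  exact Real.exp_pos _

/-- Summability of logs of `1 - q^(n+y)`. -/
private lemma aux_summable_log {q : ℝ} (hq0 : 0 < q) (hq1 : q < 1) {y : ℝ} (hy : 0 < y) :
    Summable fun n : ℕ => Real.log (1 - q ^ ((n : ℝ) + y)) := by
  have hqy : q ^ y < 1 := Real.rpow_lt_one hq0.le hq1 hy
  have hu : ∀ n : ℕ, q ^ ((n : ℝ) + y) ≤ q ^ y := fun n =>
    Real.rpow_le_rpow_of_exponent_ge hq0 hq1.le (le_add_of_nonneg_left (Nat.cast_nonneg n))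
  have hupos : ∀ n : ℕ, 0 < q ^ ((n : ℝ) + y) := fun n => Real.rpow_pos_of_pos hq0 _
  have hbpos : ∀ n : ℕ, 0 < 1 - q ^ ((n : ℝ) + y) := fun n => by
    have := hu n; linarith
  rw [← summable_neg_iff]
  have hgeo : Summable fun n : ℕ => (q ^ y / (1 - q ^ y)) * q ^ n :=
    (summable_geometric_of_lt_one hq0.le hq1).mul_left _
  apply hgeo.of_nonneg_of_le
  · intro n
    rw [neg_nonneg]
    exact Real.log_nonpos (hbpos n).le (by linarith [hupos n])
  · intro n
    have h1 : -Real.log (1 - q ^ ((n : ℝ) + y)) = Real.log (1 - q ^ ((n : ℝ) + y))⁻¹ := by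
      rw [Real.log_inv]
    rw [h1]
    have h2 : Real.log (1 - q ^ ((n : ℝ) + y))⁻¹ ≤ (1 - q ^ ((n : ℝ) + y))⁻¹ - 1 :=
      Real.log_le_sub_one_of_pos (inv_pos.2 (hbpos n))
    have hne : (1 - q ^ ((n : ℝ) + y)) ≠ 0 := (hbpos n).ne'
    have h3 : (1 - q ^ ((n : ℝ) + y))⁻¹ - 1 = q ^ ((n : ℝ) + y) / (1 - q ^ ((n : ℝ) + y)) := by
      field_simp
      ring
    have h4 : q ^ ((n : ℝ) + y) / (1 - q ^ ((n : ℝ) + y)) ≤ q ^ ((n : ℝ) + y) / (1 - q ^ y) :=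
      div_le_div_of_nonneg_left (hupos n).le (by linarith) (by linarith [hu n])
    have h5 : q ^ ((n : ℝ) + y) = q ^ y * q ^ n := by
      rw [Real.rpow_add hq0, ← Real.rpow_natCast q n, mul_comm]
    calc Real.log (1 - q ^ ((n : ℝ) + y))⁻¹ ≤ q ^ ((n : ℝ) + y) / (1 - q ^ y) := by
          rw [← h3] at h4; linarith
      _ = (q ^ y / (1 - q ^ y)) * q ^ n := by rw [h5]; ring

section steps
variable {q s : ℝ}

private lemma aux_step_up (hq0 : 0 < q) (hq1 : q < 1) (hs0 : 0 < s) (hs1 : s < 1)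
    {c : ℝ} (hc : 0 < c) :
    (1 - q ^ c) / (1 - q ^ (c + s)) ≤ ((1 - q ^ c) / (1 - q ^ (c + 1))) ^ s := by
  have hqc : q ^ c < 1 := Real.rpow_lt_one hq0.le hq1 hc
  have hqc1 : q ^ (c + 1) < 1 := Real.rpow_lt_one hq0.le hq1 (by linarith)
  have hqcs : q ^ (c + s) < 1 := Real.rpow_lt_one hq0.le hq1 (by linarith)
  have hA : 0 < 1 - q ^ c := by linarith
  have hB : 0 < 1 - q ^ (c + 1) := by linarith
  have hC : 0 < 1 - q ^ (c + s) := by linarith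
  have hkey := aux_key (Real.rpow_pos_of_pos hq0 c).le hqc.le
    (Real.rpow_pos_of_pos hq0 (c + 1)).le hqc1.le (by linarith : (0:ℝ) ≤ s) hs1.le
  have hmul : (q ^ c) ^ (1 - s) * (q ^ (c + 1)) ^ s = q ^ (c + s) := by
    rw [← Real.rpow_mul hq0.le, ← Real.rpow_mul hq0.le, ← Real.rpow_add hq0]
    congr 1; ring
  rw [hmul] at hkey
  -- hkey : (1 - q^c)^(1-s) * (1 - q^(c+1))^s ≤ 1 - q^(c+s)
  have hA1 : (1 - q ^ c) ^ (1 - s) * (1 - q ^ c) ^ s = 1 - q ^ c := by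
    rw [← Real.rpow_add hA, sub_add_cancel, Real.rpow_one]
  calc (1 - q ^ c) / (1 - q ^ (c + s))
      ≤ (1 - q ^ c) / ((1 - q ^ c) ^ (1 - s) * (1 - q ^ (c + 1)) ^ s) :=
        div_le_div_of_nonneg_left hA.le (by positivity) hkey
    _ = (1 - q ^ c) ^ s / (1 - q ^ (c + 1)) ^ s := by
        rw [div_eq_div_iff (by positivity) (by positivity)]
        linear_combination (-((1 - q ^ (c + 1)) ^ s)) * hA1
    _ = ((1 - q ^ c) / (1 - q ^ (c + 1))) ^ s := (Real.div_rpow hA.le hB.le s).symm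

private lemma aux_step_lo (hq0 : 0 < q) (hq1 : q < 1) (hs0 : 0 < s) (hs1 : s < 1)
    {c : ℝ} (hc : 0 < c) :
    ((1 - q ^ (c + s)) / (1 - q ^ (c + 1 + s))) ^ s ≤ (1 - q ^ (c + 1)) / (1 - q ^ (c + 1 + s)) := by
  have hqb : q ^ (c + 1) < 1 := Real.rpow_lt_one hq0.le hq1 (by linarith)
  have hqd : q ^ (c + 1 + s) < 1 := Real.rpow_lt_one hq0.le hq1 (by linarith)
  have hqc : q ^ (c + s) < 1 := Real.rpow_lt_one hq0.le hq1 (by linarith)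
  have hB : 0 < 1 - q ^ (c + 1) := by linarith
  have hD : 0 < 1 - q ^ (c + 1 + s) := by linarith
  have hC : 0 < 1 - q ^ (c + s) := by linarith
  have hkey := aux_key (Real.rpow_pos_of_pos hq0 (c + 1 + s)).le hqd.le
    (Real.rpow_pos_of_pos hq0 (c + s)).le hqc.le (by linarith : (0:ℝ) ≤ s) hs1.le
  have hmul : (q ^ (c + 1 + s)) ^ (1 - s) * (q ^ (c + s)) ^ s = q ^ (c + 1) := by
    rw [← Real.rpow_mul hq0.le, ← Real.rpow_mul hq0.le, ← Real.rpow_add hq0]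
    congr 1; ring
  rw [hmul] at hkey
  -- hkey : (1-q^(c+1+s))^(1-s) * (1-q^(c+s))^s ≤ 1 - q^(c+1)
  have hD1 : (1 - q ^ (c + 1 + s)) ^ (1 - s) * (1 - q ^ (c + 1 + s)) ^ s = 1 - q ^ (c + 1 + s) := by
    rw [← Real.rpow_add hD, sub_add_cancel, Real.rpow_one]
  calc ((1 - q ^ (c + s)) / (1 - q ^ (c + 1 + s))) ^ s
      = (1 - q ^ (c + s)) ^ s / (1 - q ^ (c + 1 + s)) ^ s := Real.div_rpow hC.le hD.le s
    _ = ((1 - q ^ (c + 1 + s)) ^ (1 - s) * (1 - q ^ (c + s)) ^ s) / (1 - q ^ (c + 1 + s)) := by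
        rw [div_eq_div_iff (by positivity) (by positivity)]
        linear_combination (-((1 - q ^ (c + s)) ^ s)) * hD1
    _ ≤ (1 - q ^ (c + 1)) / (1 - q ^ (c + 1 + s)) := (div_le_div_iff_of_pos_right hD).2 hkey

end steps

private noncomputable def bb (q x : ℝ) (n : ℕ) : ℝ := 1 - q ^ ((n : ℝ) + x)

section bb
variable {q s x : ℝ}

private lemma bb_pos (hq0 : 0 < q) (hq1 : q < 1) (hx : 0 < x) (n : ℕ) : 0 < bb q x n := by
  have : q ^ ((n : ℝ) + x) < 1 :=
    Real.rpow_lt_one hq0.le hq1 (by positivity)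
  unfold bb; linarith

private lemma bb_succ (n : ℕ) : bb q x (n + 1) = 1 - q ^ ((n : ℝ) + x + 1) := by
  unfold bb; push_cast; ring_nf

private lemma bb_tendsto (hq0 : 0 < q) (hq1 : q < 1) : Filter.Tendsto (bb q x) Filter.atTop (nhds 1) := by
  have he : bb q x = fun n : ℕ => 1 - q ^ x * q ^ n := by
    funext n
    unfold bb
    rw [add_comm, Real.rpow_add hq0, Real.rpow_natCast]
  rw [he]
  have h0 : Filter.Tendsto (fun n : ℕ => q ^ x * q ^ n) Filter.atTop (nhds 0) := by
    have := (tendsto_pow_atTop_nhds_zero_of_lt_one hq0.le hq1).const_mul (q ^ x)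
    simpa using this
  simpa using tendsto_const_nhds.sub h0

private lemma tel_up (hq0 : 0 < q) (hq1 : q < 1) (hs0 : 0 < s) (hs1 : s < 1) (hx : 0 < x) :
    ∀ N : ℕ, ∏ i ∈ Finset.range N, bb q x i / bb q (x + s) i ≤ (bb q x 0 / bb q x N) ^ s := by
  intro N
  induction N with
  | zero => simp [div_self (bb_pos hq0 hq1 hx 0).ne', Real.one_rpow]
  | succ N ih =>
    rw [Finset.prod_range_succ]
    have hc : (0:ℝ) < (N : ℝ) + x := by positivity
    have hstep : bb q x N / bb q (x + s) N ≤ (bb q x N / bb q x (N + 1)) ^ s := by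
      have := aux_step_up hq0 hq1 hs0 hs1 hc
      rw [bb_succ]
      unfold bb
      rw [show (N : ℝ) + (x + s) = (N : ℝ) + x + s by ring]
      exact this
    have h1 : ∏ i ∈ Finset.range N, bb q x i / bb q (x + s) i ≤ (bb q x 0 / bb q x N) ^ s := ih
    have hnn : (0:ℝ) ≤ bb q x N / bb q (x + s) N :=
      (div_pos (bb_pos hq0 hq1 hx N) (bb_pos hq0 hq1 (by linarith) N)).le
    calc (∏ i ∈ Finset.range N, bb q x i / bb q (x + s) i) * (bb q x N / bb q (x + s) N)
        ≤ (bb q x 0 / bb q x N) ^ s * (bb q x N / bb q x (N + 1)) ^ s :=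
          mul_le_mul h1 hstep hnn (Real.rpow_nonneg (div_nonneg (bb_pos hq0 hq1 hx 0).le
            (bb_pos hq0 hq1 hx N).le) s)
      _ = (bb q x 0 / bb q x (N + 1)) ^ s := by
          rw [← Real.mul_rpow (div_nonneg (bb_pos hq0 hq1 hx 0).le (bb_pos hq0 hq1 hx N).le)
            (div_nonneg (bb_pos hq0 hq1 hx N).le (bb_pos hq0 hq1 hx (N + 1)).le),
            div_mul_div_cancel₀]
          exact (bb_pos hq0 hq1 hx N).ne'

private lemma tel_lo (hq0 : 0 < q) (hq1 : q < 1) (hs0 : 0 < s) (hs1 : s < 1) (hx : 0 < x) :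
    ∀ N : ℕ, bb q x 0 / bb q (x + s) 0 * (bb q (x + s) 0 / bb q (x + s) N) ^ s ≤
      ∏ i ∈ Finset.range (N + 1), bb q x i / bb q (x + s) i := by
  have hxs : (0:ℝ) < x + s := by linarith
  intro N
  induction N with
  | zero => simp [div_self (bb_pos hq0 hq1 hxs 0).ne', Real.one_rpow]
  | succ N ih =>
    rw [Finset.prod_range_succ]
    have hc : (0:ℝ) < (N : ℝ) + x := by positivity
    have hstep : (bb q (x + s) N / bb q (x + s) (N + 1)) ^ s ≤ bb q x (N + 1) / bb q (x + s) (N + 1) := by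
      have := aux_step_lo hq0 hq1 hs0 hs1 hc
      rw [bb_succ, bb_succ]
      unfold bb
      rw [show (N : ℝ) + (x + s) = (N : ℝ) + x + s by ring,
        show (N : ℝ) + x + s + 1 = (N : ℝ) + x + 1 + s by ring]
      exact this
    calc bb q x 0 / bb q (x + s) 0 * (bb q (x + s) 0 / bb q (x + s) (N + 1)) ^ s
        = bb q x 0 / bb q (x + s) 0 *
            ((bb q (x + s) 0 / bb q (x + s) N) ^ s * (bb q (x + s) N / bb q (x + s) (N + 1)) ^ s) := by
          rw [← Real.mul_rpow (div_nonneg (bb_pos hq0 hq1 hxs 0).le (bb_pos hq0 hq1 hxs N).le)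
            (div_nonneg (bb_pos hq0 hq1 hxs N).le (bb_pos hq0 hq1 hxs (N + 1)).le),
            div_mul_div_cancel₀]
          exact (bb_pos hq0 hq1 hxs N).ne'
      _ ≤ (∏ i ∈ Finset.range (N + 1), bb q x i / bb q (x + s) i) *
            (bb q x (N + 1) / bb q (x + s) (N + 1)) := by
          rw [← mul_assoc]
          exact mul_le_mul ih hstep (Real.rpow_nonneg (div_nonneg (bb_pos hq0 hq1 hxs N).le
            (bb_pos hq0 hq1 hxs (N + 1)).le) s)
            (Finset.prod_nonneg fun i _ => (div_pos (bb_pos hq0 hq1 hx i)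
              (bb_pos hq0 hq1 hxs i)).le)

end bb

private lemma aux_mult_div {q : ℝ} (hq0 : 0 < q) (hq1 : q < 1) {y z : ℝ} (hy : 0 < y)
    (hz : 0 < z) :
    Multipliable (fun n : ℕ => (1 - q ^ ((n : ℝ) + y)) / (1 - q ^ ((n : ℝ) + z))) ∧
      0 < ∏' n : ℕ, (1 - q ^ ((n : ℝ) + y)) / (1 - q ^ ((n : ℝ) + z)) := by
  apply aux_tprod_pos
  · intro n
    exact div_pos (bb_pos hq0 hq1 hy n) (bb_pos hq0 hq1 hz n)
  · refine ((aux_summable_log hq0 hq1 hy).sub (aux_summable_log hq0 hq1 hz)).congr fun n => ?_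
    exact (Real.log_div (bb_pos hq0 hq1 hy n).ne' (bb_pos hq0 hq1 hz n).ne').symm


/-- The q-deformed Gamma function:
    `Γ_q(x) = (1-q)^(1-x) * ∏_{n=0}^∞ (1-q^(n+1))/(1-q^(n+x))`. -/
noncomputable def qGamma (q x : ℝ) : ℝ :=
  (1 - q) ^ (1 - x) * ∏' n : ℕ, (1 - q ^ ((n : ℝ) + 1)) / (1 - q ^ ((n : ℝ) + x))

/-- The q-bracket: `[x]_q = (1-q^x)/(1-q)`. -/
noncomputable def qBracket (q x : ℝ) : ℝ := (1 - q ^ x) / (1 - q)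

theorem qWendel_inequality (q s x : ℝ) (hq : q ∈ Set.Ioo (0 : ℝ) 1)
    (hs : s ∈ Set.Ioo (0 : ℝ) 1) (hx : 0 < x) :
    (qBracket q x / qBracket q (x + s)) ^ (1 - s) ≤
      qGamma q (x + s) / (qBracket q x ^ s * qGamma q x) ∧
    qGamma q (x + s) / (qBracket q x ^ s * qGamma q x) ≤ 1 := by
  obtain ⟨hq0, hq1⟩ := hq
  obtain ⟨hs0, hs1⟩ := hs
  have hxs : 0 < x + s := by linarith
  have hG : (0:ℝ) < 1 - q := by linarith
  have hqx : q ^ x < 1 := Real.rpow_lt_one hq0.le hq1 hx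
  have hqxs : q ^ (x + s) < 1 := Real.rpow_lt_one hq0.le hq1 hxs
  have hB0 : (0:ℝ) < 1 - q ^ x := by linarith
  have hD0 : (0:ℝ) < 1 - q ^ (x + s) := by linarith
  set T := ∏' n : ℕ, (1 - q ^ ((n : ℝ) + x)) / (1 - q ^ ((n : ℝ) + (x + s))) with hTdef
  obtain ⟨hTmult, hTpos⟩ := aux_mult_div hq0 hq1 hx hxs
  obtain ⟨hAmult, hApos⟩ := aux_mult_div hq0 hq1 one_pos hx
  have hsplit : (∏' n : ℕ, (1 - q ^ ((n : ℝ) + 1)) / (1 - q ^ ((n : ℝ) + (x + s)))) =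
      (∏' n : ℕ, (1 - q ^ ((n : ℝ) + 1)) / (1 - q ^ ((n : ℝ) + x))) * T := by
    rw [hTdef, ← hAmult.tprod_mul hTmult]
    exact tprod_congr fun n => (div_mul_div_cancel₀ (bb_pos hq0 hq1 hx n).ne').symm
  -- partial products tend to T
  have hprod : Filter.Tendsto (fun N : ℕ => ∏ i ∈ Finset.range N, bb q x i / bb q (x + s) i)
      Filter.atTop (nhds T) := hTmult.hasProd.tendsto_prod_nat
  have hTle : T ≤ (1 - q ^ x) ^ s := by
    have hlim : Filter.Tendsto (fun N : ℕ => (bb q x 0 / bb q x N) ^ s) Filter.atTop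
        (nhds ((bb q x 0 / 1) ^ s)) :=
      (tendsto_const_nhds.div (bb_tendsto hq0 hq1) one_ne_zero).rpow_const (Or.inr hs0.le)
    have := le_of_tendsto_of_tendsto' hprod hlim (tel_up hq0 hq1 hs0 hs1 hx)
    simpa [bb, div_one] using this
  have hTge : (1 - q ^ x) / (1 - q ^ (x + s)) * (1 - q ^ (x + s)) ^ s ≤ T := by
    have hprod' : Filter.Tendsto
        (fun N : ℕ => ∏ i ∈ Finset.range (N + 1), bb q x i / bb q (x + s) i)
        Filter.atTop (nhds T) := hprod.comp (Filter.tendsto_add_atTop_nat 1)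
    have hlim : Filter.Tendsto
        (fun N : ℕ => bb q x 0 / bb q (x + s) 0 * (bb q (x + s) 0 / bb q (x + s) N) ^ s)
        Filter.atTop (nhds (bb q x 0 / bb q (x + s) 0 * (bb q (x + s) 0 / 1) ^ s)) :=
      tendsto_const_nhds.mul
        ((tendsto_const_nhds.div (bb_tendsto hq0 hq1) one_ne_zero).rpow_const (Or.inr hs0.le))
    have := le_of_tendsto_of_tendsto' hlim hprod' (tel_lo hq0 hq1 hs0 hs1 hx)
    simpa [bb, div_one] using this
  have hBsne : ((1:ℝ) - q ^ x) ^ s ≠ 0 := (Real.rpow_pos_of_pos hB0 s).ne'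
  have hF : qGamma q (x + s) / (qBracket q x ^ s * qGamma q x) = T / (1 - q ^ x) ^ s := by
    rw [qGamma, qGamma, qBracket, hsplit, Real.div_rpow hB0.le hG.le]
    have hGrel : (1 - q) ^ (1 - x) / (1 - q) ^ s = (1 - q) ^ (1 - (x + s)) := by
      rw [← Real.rpow_sub hG]
      congr 1
      ring
    have hden : (0:ℝ) < (1 - q ^ x) ^ s / (1 - q) ^ s *
        ((1 - q) ^ (1 - x) * ∏' n : ℕ, (1 - q ^ ((n : ℝ) + 1)) / (1 - q ^ ((n : ℝ) + x))) :=
      mul_pos (div_pos (Real.rpow_pos_of_pos hB0 s) (Real.rpow_pos_of_pos hG s))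
        (mul_pos (Real.rpow_pos_of_pos hG _) hApos)
    rw [div_eq_div_iff hden.ne' hBsne]
    linear_combination (-(∏' n : ℕ, (1 - q ^ ((n : ℝ) + 1)) / (1 - q ^ ((n : ℝ) + x))) * T *
      (1 - q ^ x) ^ s) * hGrel
  have hBr : qBracket q x / qBracket q (x + s) = (1 - q ^ x) / (1 - q ^ (x + s)) := by
    rw [qBracket, qBracket, div_div_div_cancel_right₀]
    exact hG.ne'
  rw [hBr, hF]
  constructor
  · have heq : ((1 - q ^ x) / (1 - q ^ (x + s))) ^ (1 - s) =
        ((1 - q ^ x) / (1 - q ^ (x + s)) * (1 - q ^ (x + s)) ^ s) / (1 - q ^ x) ^ s := by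
      rw [Real.div_rpow hB0.le hD0.le, Real.rpow_sub hB0, Real.rpow_sub hD0, Real.rpow_one,
        Real.rpow_one]
      have hDsne : ((1:ℝ) - q ^ (x + s)) ^ s ≠ 0 := (Real.rpow_pos_of_pos hD0 s).ne'
      field_simp
    rw [heq]
    exact div_le_div_of_nonneg_right hTge (Real.rpow_pos_of_pos hB0 s).le
  · exact (div_le_one (Real.rpow_pos_of_pos hB0 s)).2 hTle
end

section
/- Let q ∈ (0,1), s ∈ (0,1) and x > 0. Then Γ_q(x+s) ≤ (Γ_q(x))^{1-s} · (Γ_q(x+1))^{s}. -/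
section aux

variable {q : ℝ}

private lemma one_sub_qpow_pos (hq : q ∈ Set.Ioo (0 : ℝ) 1) {c : ℝ} (hc : 0 < c) :
    0 < 1 - q ^ c :=
  sub_pos.2 (Real.rpow_lt_one hq.1.le hq.2 hc)

private lemma summable_logq (hq : q ∈ Set.Ioo (0 : ℝ) 1) {c : ℝ} (hc : 0 < c) :
    Summable (fun n : ℕ => Real.log (1 - q ^ ((n : ℝ) + c))) := by
  obtain ⟨hq0, hq1⟩ := hq
  have hcn : ∀ n : ℕ, (0 : ℝ) < (n : ℝ) + c := fun n => by positivity
  have hpos : ∀ n : ℕ, 0 < 1 - q ^ ((n : ℝ) + c) :=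
    fun n => one_sub_qpow_pos ⟨hq0, hq1⟩ (hcn n)
  have hqc : 0 < 1 - q ^ c := one_sub_qpow_pos ⟨hq0, hq1⟩ hc
  rw [← summable_neg_iff]
  refine Summable.of_nonneg_of_le ?_ ?_
    (((summable_geometric_of_lt_one hq0.le hq1)).mul_left (q ^ c / (1 - q ^ c)))
  · intro n
    rw [neg_nonneg]
    apply Real.log_nonpos (hpos n).le
    have : 0 < q ^ ((n : ℝ) + c) := Real.rpow_pos_of_pos hq0 _
    linarith
  · intro n
    set t := q ^ ((n : ℝ) + c) with ht
    have htpos : 0 < t := Real.rpow_pos_of_pos hq0 _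
    have htlt : t ≤ q ^ c := by
      rw [ht, Real.rpow_add hq0]
      nth_rewrite 2 [← one_mul (q ^ c)]
      apply mul_le_mul_of_nonneg_right _ (Real.rpow_pos_of_pos hq0 c).le
      exact Real.rpow_le_one hq0.le hq1.le (Nat.cast_nonneg n)
    have h1t : 0 < 1 - t := hpos n
    have hlog : -Real.log (1 - t) ≤ t / (1 - t) := by
      have := Real.log_le_sub_one_of_pos (x := (1 - t)⁻¹) (by positivity)
      rw [Real.log_inv] at this
      have heq : (1 - t)⁻¹ - 1 = t / (1 - t) := by field_simp; ring
      linarith [heq ▸ this]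
    have hdiv : t / (1 - t) ≤ t / (1 - q ^ c) := by
      apply div_le_div_of_nonneg_left htpos.le hqc
      linarith
    have hteq : t / (1 - q ^ c) = q ^ c / (1 - q ^ c) * q ^ n := by
      rw [ht, Real.rpow_add hq0, ← Real.rpow_natCast q n]
      ring
    linarith [hteq ▸ hdiv]

private lemma key_log_ineq (hq : q ∈ Set.Ioo (0 : ℝ) 1) {s a : ℝ}
    (hs : s ∈ Set.Ioo (0 : ℝ) 1) (ha : 0 < a) :
    (1 - s) * Real.log (1 - q ^ a) + s * Real.log (1 - q ^ (a + 1)) ≤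
      Real.log (1 - q ^ (a + s)) := by
  obtain ⟨hq0, hq1⟩ := hq
  obtain ⟨hs0, hs1⟩ := hs
  have hu : 0 < 1 - q ^ a := one_sub_qpow_pos ⟨hq0, hq1⟩ ha
  have hv : 0 < 1 - q ^ (a + 1) := one_sub_qpow_pos ⟨hq0, hq1⟩ (by linarith)
  have hw : 0 < 1 - q ^ (a + s) := one_sub_qpow_pos ⟨hq0, hq1⟩ (by linarith)
  set u := 1 - q ^ a
  set v := 1 - q ^ (a + 1)
  have h1 : u ^ (1 - s) * v ^ s ≤ (1 - s) * u + s * v :=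
    Real.geom_mean_le_arith_mean2_weighted (by linarith) hs0.le hu.le hv.le (by ring)
  have hqs : q ^ s ≤ 1 - s + s * q := by
    have := Real.geom_mean_le_arith_mean2_weighted (w₁ := 1 - s) (w₂ := s)
      (p₁ := 1) (p₂ := q) (by linarith) hs0.le zero_le_one hq0.le (by ring)
    simpa [Real.one_rpow] using this
  have hqa : 0 < q ^ a := Real.rpow_pos_of_pos hq0 a
  have h2 : (1 - s) * u + s * v ≤ 1 - q ^ (a + s) := by
    have e1 : q ^ (a + s) = q ^ a * q ^ s := Real.rpow_add hq0 a s
    have e2 : q ^ (a + 1) = q ^ a * q := by rw [Real.rpow_add hq0, Real.rpow_one]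
    simp only [u, v, e1, e2]
    nlinarith [mul_le_mul_of_nonneg_left hqs hqa.le]
  have h3 : (1 - s) * Real.log u + s * Real.log v = Real.log (u ^ (1 - s) * v ^ s) := by
    rw [Real.log_mul (by positivity) (by positivity), Real.log_rpow hu, Real.log_rpow hv]
  rw [h3]
  exact Real.log_le_log (by positivity) (h1.trans h2)

end aux

theorem qGamma_log_convex_ineq (q s x : ℝ) (hq : q ∈ Set.Ioo (0 : ℝ) 1)
    (hs : s ∈ Set.Ioo (0 : ℝ) 1) (hx : 0 < x) :
    qGamma q (x + s) ≤ qGamma q x ^ (1 - s) * qGamma q (x + 1) ^ s := by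
  obtain ⟨hq0, hq1⟩ := hq
  obtain ⟨hs0, hs1⟩ := hs
  have hq' : q ∈ Set.Ioo (0 : ℝ) 1 := ⟨hq0, hq1⟩
  have h1q : (0 : ℝ) < 1 - q := by linarith
  set L : ℝ → ℕ → ℝ :=
    fun c n => Real.log ((1 - q ^ ((n : ℝ) + 1)) / (1 - q ^ ((n : ℝ) + c))) with hLdef
  have hgpos : ∀ c : ℝ, 0 < c → ∀ n : ℕ,
      0 < (1 - q ^ ((n : ℝ) + 1)) / (1 - q ^ ((n : ℝ) + c)) := by
    intro c hc n
    have h1 : (0:ℝ) < 1 - q ^ ((n : ℝ) + 1) := one_sub_qpow_pos hq' (by positivity)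
    have h2 : (0:ℝ) < 1 - q ^ ((n : ℝ) + c) := one_sub_qpow_pos hq' (by positivity)
    positivity
  have hLeq : ∀ c : ℝ, 0 < c → ∀ n : ℕ,
      L c n = Real.log (1 - q ^ ((n : ℝ) + 1)) - Real.log (1 - q ^ ((n : ℝ) + c)) := by
    intro c hc n
    have h1 : (0:ℝ) < 1 - q ^ ((n : ℝ) + 1) := one_sub_qpow_pos hq' (by positivity)
    have h2 : (0:ℝ) < 1 - q ^ ((n : ℝ) + c) := one_sub_qpow_pos hq' (by positivity)
    rw [hLdef]
    exact Real.log_div h1.ne' h2.ne'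
  have hLsum : ∀ c : ℝ, 0 < c → Summable (L c) := by
    intro c hc
    exact ((summable_logq hq' one_pos).sub (summable_logq hq' hc)).congr
      (fun n => (hLeq c hc n).symm)
  have hA : ∀ c : ℝ, 0 < c →
      (∏' n : ℕ, (1 - q ^ ((n : ℝ) + 1)) / (1 - q ^ ((n : ℝ) + c))) =
        Real.exp (∑' n : ℕ, L c n) := by
    intro c hc
    have := Real.rexp_tsum_eq_tprod
      (f := fun (n : ℕ) => (1 - q ^ ((n : ℝ) + 1)) / (1 - q ^ ((n : ℝ) + c)))
      (fun n => hgpos c hc n) (hLsum c hc)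
    exact this.symm
  have hx1 : (0:ℝ) < x + 1 := by linarith
  have hxs : (0:ℝ) < x + s := by linarith
  -- termwise inequality
  have hterm : ∀ n : ℕ, L (x + s) n ≤ L x n * (1 - s) + L (x + 1) n * s := by
    intro n
    have ha : (0:ℝ) < (n : ℝ) + x := by positivity
    have key := key_log_ineq hq' ⟨hs0, hs1⟩ ha
    rw [hLeq _ hxs n, hLeq _ hx n, hLeq _ hx1 n]
    have e1 : (n : ℝ) + (x + s) = ((n : ℝ) + x) + s := by ring
    have e2 : (n : ℝ) + (x + 1) = ((n : ℝ) + x) + 1 := by ring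
    rw [e1, e2]
    nlinarith [key]
  have hsumineq : (∑' n : ℕ, L (x + s) n) ≤
      (∑' n : ℕ, L x n) * (1 - s) + (∑' n : ℕ, L (x + 1) n) * s := by
    have h1 : (∑' n : ℕ, L x n) * (1 - s) + (∑' n : ℕ, L (x + 1) n) * s =
        ∑' n : ℕ, (L x n * (1 - s) + L (x + 1) n * s) := by
      rw [Summable.tsum_add ((hLsum x hx).mul_right _) ((hLsum (x + 1) hx1).mul_right _),
        tsum_mul_right, tsum_mul_right]
    rw [h1]
    exact Summable.tsum_le_tsum hterm (hLsum _ hxs)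
      (((hLsum x hx).mul_right _).add ((hLsum (x + 1) hx1).mul_right _))
  -- assemble
  unfold qGamma
  rw [hA x hx, hA (x + 1) hx1, hA (x + s) hxs]
  rw [Real.mul_rpow (Real.rpow_nonneg h1q.le _) (Real.exp_pos _).le,
    Real.mul_rpow (Real.rpow_nonneg h1q.le _) (Real.exp_pos _).le,
    ← Real.rpow_mul h1q.le, ← Real.rpow_mul h1q.le,
    ← Real.exp_mul, ← Real.exp_mul]
  calc (1 - q) ^ (1 - (x + s)) * Real.exp (∑' n : ℕ, L (x + s) n)
      ≤ (1 - q) ^ (1 - (x + s)) *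
        Real.exp ((∑' n : ℕ, L x n) * (1 - s) + (∑' n : ℕ, L (x + 1) n) * s) := by
        apply mul_le_mul_of_nonneg_left _ (Real.rpow_nonneg h1q.le _)
        exact Real.exp_le_exp.2 hsumineq
    _ = (1 - q) ^ ((1 - x) * (1 - s)) * Real.exp ((∑' n : ℕ, L x n) * (1 - s)) *
        ((1 - q) ^ ((1 - (x + 1)) * s) * Real.exp ((∑' n : ℕ, L (x + 1) n) * s)) := by
        rw [Real.exp_add]
        have : (1 - q) ^ (1 - (x + s)) =
            (1 - q) ^ ((1 - x) * (1 - s)) * (1 - q) ^ ((1 - (x + 1)) * s) := by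
          rw [← Real.rpow_add h1q]
          ring_nf
        rw [this]; ring
end

section
/- Let q ∈ (0,1), s ∈ (0,1) and x > 0. Then Γ_q(x+s) ≤ [x]_q^s · Γ_q(x). -/
open Real Filter

section QAux

variable {q : ℝ}

lemma qaux_lt_one (hq0 : 0 < q) (hq1 : q < 1) {t : ℝ} (ht : 0 < t) : q ^ t < 1 :=
  Real.rpow_lt_one hq0.le hq1 ht

lemma qaux_pos (hq0 : 0 < q) (hq1 : q < 1) {t : ℝ} (ht : 0 < t) : 0 < 1 - q ^ t := by
  have := qaux_lt_one hq0 hq1 ht; linarith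

/-- Summability of the logs. -/
lemma qaux_summable (hq0 : 0 < q) (hq1 : q < 1) {y : ℝ} (hy : 0 < y) :
    Summable (fun n : ℕ => Real.log (1 - q ^ ((n : ℝ) + y))) := by
  rw [← summable_neg_iff]
  have hqy : 0 < 1 - q ^ y := qaux_pos hq0 hq1 hy
  refine Summable.of_nonneg_of_le ?_ ?_
    ((summable_geometric_of_lt_one hq0.le hq1).mul_left (q ^ y / (1 - q ^ y)))
  · intro n
    have h1 : 0 < (n : ℝ) + y := by positivity
    have := qaux_lt_one hq0 hq1 h1
    have hp : 0 < q ^ ((n : ℝ) + y) := Real.rpow_pos_of_pos hq0 _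
    have h2 : Real.log (1 - q ^ ((n : ℝ) + y)) ≤ 0 := by
      apply Real.log_nonpos (by linarith) (by linarith)
    linarith
  · intro n
    have h1 : 0 < (n : ℝ) + y := by positivity
    have hpos := qaux_pos hq0 hq1 h1
    have hle : q ^ ((n : ℝ) + y) ≤ q ^ y := by
      exact Real.rpow_le_rpow_of_exponent_ge hq0 hq1.le (le_add_of_nonneg_left (Nat.cast_nonneg n))
    have hlog : Real.log (1 / (1 - q ^ ((n : ℝ) + y))) ≤ 1 / (1 - q ^ ((n : ℝ) + y)) - 1 :=
      Real.log_le_sub_one_of_pos (by positivity)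
    rw [Real.log_div one_ne_zero (ne_of_gt hpos), Real.log_one] at hlog
    have key : -Real.log (1 - q ^ ((n : ℝ) + y)) ≤ q ^ ((n : ℝ) + y) / (1 - q ^ y) := by
      have h3 : 1 / (1 - q ^ ((n : ℝ) + y)) - 1 = q ^ ((n : ℝ) + y) / (1 - q ^ ((n : ℝ) + y)) := by
        field_simp
        ring
      rw [h3] at hlog
      calc -Real.log (1 - q ^ ((n : ℝ) + y)) ≤ q ^ ((n : ℝ) + y) / (1 - q ^ ((n : ℝ) + y)) := by
            linarith
        _ ≤ q ^ ((n : ℝ) + y) / (1 - q ^ y) := by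
            apply div_le_div_of_nonneg_left (by positivity) hqy (by linarith)
    calc -Real.log (1 - q ^ ((n : ℝ) + y)) ≤ q ^ ((n : ℝ) + y) / (1 - q ^ y) := key
      _ = q ^ y / (1 - q ^ y) * q ^ n := by
          rw [add_comm, Real.rpow_add hq0, Real.rpow_natCast]; ring

/-- The infinite product in qGamma as an exponential of a sum of logs. -/
lemma qaux_tprod (hq0 : 0 < q) (hq1 : q < 1) {y : ℝ} (hy : 0 < y) :
    (∏' n : ℕ, (1 - q ^ ((n : ℝ) + 1)) / (1 - q ^ ((n : ℝ) + y))) =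
      Real.exp (∑' n : ℕ, (Real.log (1 - q ^ ((n : ℝ) + 1)) - Real.log (1 - q ^ ((n : ℝ) + y)))) := by
  have hsum := ((qaux_summable hq0 hq1 one_pos).sub (qaux_summable hq0 hq1 hy)).hasSum
  have hprod := hsum.rexp
  have : (Real.exp ∘ fun n : ℕ =>
      Real.log (1 - q ^ ((n : ℝ) + 1)) - Real.log (1 - q ^ ((n : ℝ) + y))) =
      fun n : ℕ => (1 - q ^ ((n : ℝ) + 1)) / (1 - q ^ ((n : ℝ) + y)) := by
    funext n
    have h1 : 0 < 1 - q ^ ((n : ℝ) + 1) := qaux_pos hq0 hq1 (by positivity)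
    have h2 : 0 < 1 - q ^ ((n : ℝ) + y) := qaux_pos hq0 hq1 (by positivity)
    simp [Real.exp_sub, Real.exp_log h1, Real.exp_log h2]
  rw [this] at hprod
  exact hprod.tprod_eq

/-- Telescoping sum. -/
lemma qaux_telescope (hq0 : 0 < q) (hq1 : q < 1) {y : ℝ} (hy : 0 < y) :
    HasSum (fun n : ℕ => Real.log (1 - q ^ ((n : ℝ) + y)) - Real.log (1 - q ^ ((n : ℝ) + (y + 1))))
      (Real.log (1 - q ^ y)) := by
  set u : ℕ → ℝ := fun n => Real.log (1 - q ^ ((n : ℝ) + y)) with hu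
  have hform : ∀ n : ℕ, Real.log (1 - q ^ ((n : ℝ) + y)) - Real.log (1 - q ^ ((n : ℝ) + (y + 1)))
      = u n - u (n + 1) := by
    intro n
    have : ((n : ℝ) + (y + 1)) = (((n + 1 : ℕ) : ℝ) + y) := by push_cast; ring
    rw [hu]; simp only [this]
  have hsummable : Summable (fun n : ℕ => u n - u (n + 1)) := by
    have h1 := qaux_summable hq0 hq1 hy
    have h2 := qaux_summable hq0 hq1 (by linarith : (0:ℝ) < y + 1)
    have := h1.sub h2
    apply Summable.congr this
    intro n; rw [← hform n]
  have htends : Tendsto u atTop (nhds 0) := by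
    have hq' : Tendsto (fun n : ℕ => q ^ ((n : ℝ) + y)) atTop (nhds 0) := by
      have : (fun n : ℕ => q ^ ((n : ℝ) + y)) = fun n : ℕ => q ^ y * q ^ n := by
        funext n; rw [add_comm, Real.rpow_add hq0, Real.rpow_natCast]
      rw [this]
      simpa using (tendsto_pow_atTop_nhds_zero_of_lt_one hq0.le hq1).const_mul (q ^ y)
    have : Tendsto (fun n : ℕ => 1 - q ^ ((n : ℝ) + y)) atTop (nhds 1) := by
      simpa using (tendsto_const_nhds.sub hq')
    have hc : Tendsto Real.log (nhds 1) (nhds 0) := by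
      have := (Real.continuousAt_log one_ne_zero).tendsto
      simpa using this
    exact hc.comp this
  -- partial sums of u n - u (n+1) equal u 0 - u N
  have hps : ∀ N : ℕ, ∑ n ∈ Finset.range N, (u n - u (n + 1)) = u 0 - u N := by
    intro N; exact Finset.sum_range_sub' u N
  have hlim : Tendsto (fun N : ℕ => ∑ n ∈ Finset.range N, (u n - u (n + 1))) atTop
      (nhds (u 0)) := by
    simp only [hps]
    simpa using tendsto_const_nhds.sub htends
  have := hsummable.hasSum
  have h2 := this.tendsto_sum_nat
  have huniq : ∑' n : ℕ, (u n - u (n + 1)) = u 0 := tendsto_nhds_unique h2 hlim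
  have hu0 : u 0 = Real.log (1 - q ^ y) := by rw [hu]; norm_num
  rw [← hu0]
  have : HasSum (fun n : ℕ => u n - u (n + 1)) (u 0) := huniq ▸ hsummable.hasSum
  apply this.congr_fun  -- maybe wrong name
  intro n; exact (hform n)

/-- Key per-term inequality via weighted AM-GM. -/
lemma qaux_key (hq0 : 0 < q) (hq1 : q < 1) {y s : ℝ} (hy : 0 < y) (hs0 : 0 < s) (hs1 : s < 1) :
    Real.log (1 - q ^ y) - Real.log (1 - q ^ (y + s)) ≤
      s * (Real.log (1 - q ^ y) - Real.log (1 - q ^ (y + 1))) := by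
  set a := q ^ y with ha
  set b := q ^ (y + 1) with hb
  have h1a : 0 < 1 - a := by
    have : q ^ y < 1 := Real.rpow_lt_one hq0.le hq1 hy
    simp only [ha]; linarith
  have h1b : 0 < 1 - b := by
    have : q ^ (y + 1) < 1 := Real.rpow_lt_one hq0.le hq1 (by linarith)
    simp only [hb]; linarith
  have hapos : 0 < a := Real.rpow_pos_of_pos hq0 _
  have hbpos : 0 < b := Real.rpow_pos_of_pos hq0 _
  -- a^(1-s) * b^s = q^(y+s)
  have hab : a ^ (1 - s) * b ^ s = q ^ (y + s) := by
    rw [ha, hb, ← Real.rpow_mul hq0.le, ← Real.rpow_mul hq0.le, ← Real.rpow_add hq0]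
    ring_nf
  -- AM-GM both ways
  have hgm1 : a ^ (1 - s) * b ^ s ≤ (1 - s) * a + s * b :=
    Real.geom_mean_le_arith_mean2_weighted (by linarith) hs0.le hapos.le hbpos.le (by ring)
  have hgm2 : (1 - a) ^ (1 - s) * (1 - b) ^ s ≤ (1 - s) * (1 - a) + s * (1 - b) :=
    Real.geom_mean_le_arith_mean2_weighted (by linarith) hs0.le h1a.le h1b.le (by ring)
  have hineq : (1 - a) ^ (1 - s) * (1 - b) ^ s ≤ 1 - q ^ (y + s) := by
    rw [← hab]; nlinarith
  have hprodpos : 0 < (1 - a) ^ (1 - s) * (1 - b) ^ s := by positivity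
  have hlog : Real.log ((1 - a) ^ (1 - s) * (1 - b) ^ s) ≤ Real.log (1 - q ^ (y + s)) :=
    Real.log_le_log hprodpos hineq
  rw [Real.log_mul (by positivity) (by positivity), Real.log_rpow h1a, Real.log_rpow h1b] at hlog
  linarith

end QAux

theorem qGamma_upper (q s x : ℝ) (hq : q ∈ Set.Ioo (0 : ℝ) 1)
    (hs : s ∈ Set.Ioo (0 : ℝ) 1) (hx : 0 < x) :
    qGamma q (x + s) ≤ qBracket q x ^ s * qGamma q x := by
  obtain ⟨hq0, hq1⟩ := hq
  obtain ⟨hs0, hs1⟩ := hs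
  have hB : 0 < 1 - q := by linarith
  have hxs : 0 < x + s := by linarith
  have hA : 0 < 1 - q ^ x := qaux_pos hq0 hq1 hx
  -- summability facts
  have hS1 : Summable (fun n : ℕ => Real.log (1 - q ^ ((n : ℝ) + 1))) :=
    qaux_summable hq0 hq1 one_pos
  have hSx := qaux_summable hq0 hq1 hx
  have hSxs := qaux_summable hq0 hq1 hxs
  -- the key sum inequality
  have htel := qaux_telescope hq0 hq1 hx
  have hmul := htel.mul_left s
  have hterm : ∀ n : ℕ,
      Real.log (1 - q ^ ((n : ℝ) + x)) - Real.log (1 - q ^ ((n : ℝ) + (x + s)))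
      ≤ s * (Real.log (1 - q ^ ((n : ℝ) + x)) - Real.log (1 - q ^ ((n : ℝ) + (x + 1)))) := by
    intro n
    have h := qaux_key hq0 hq1 (show (0:ℝ) < (n : ℝ) + x by positivity) hs0 hs1
    have e1 : (n : ℝ) + (x + s) = ((n : ℝ) + x) + s := by ring
    have e2 : (n : ℝ) + (x + 1) = ((n : ℝ) + x) + 1 := by ring
    rw [e1, e2]; exact h
  have hsumineq :
      (∑' n : ℕ, (Real.log (1 - q ^ ((n : ℝ) + x)) - Real.log (1 - q ^ ((n : ℝ) + (x + s)))))
        ≤ s * Real.log (1 - q ^ x) := by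
    have h := Summable.tsum_le_tsum hterm (hSx.sub hSxs) hmul.summable
    rwa [hmul.tsum_eq] at h
  have hdiff :
      (∑' n : ℕ, (Real.log (1 - q ^ ((n : ℝ) + x)) - Real.log (1 - q ^ ((n : ℝ) + (x + s)))))
        = (∑' n : ℕ, Real.log (1 - q ^ ((n : ℝ) + x)))
          - ∑' n : ℕ, Real.log (1 - q ^ ((n : ℝ) + (x + s))) := Summable.tsum_sub hSx hSxs
  have hT1 :
      (∑' n : ℕ, (Real.log (1 - q ^ ((n : ℝ) + 1)) - Real.log (1 - q ^ ((n : ℝ) + (x + s)))))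
        = (∑' n : ℕ, Real.log (1 - q ^ ((n : ℝ) + 1)))
          - ∑' n : ℕ, Real.log (1 - q ^ ((n : ℝ) + (x + s))) := Summable.tsum_sub hS1 hSxs
  have hT2 :
      (∑' n : ℕ, (Real.log (1 - q ^ ((n : ℝ) + 1)) - Real.log (1 - q ^ ((n : ℝ) + x))))
        = (∑' n : ℕ, Real.log (1 - q ^ ((n : ℝ) + 1)))
          - ∑' n : ℕ, Real.log (1 - q ^ ((n : ℝ) + x)) := Summable.tsum_sub hS1 hSx
  -- rewrite qGamma via exp
  rw [qGamma, qGamma, qaux_tprod hq0 hq1 hxs, qaux_tprod hq0 hq1 hx, qBracket]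
  have key : Real.exp
      (∑' n : ℕ, (Real.log (1 - q ^ ((n : ℝ) + 1)) - Real.log (1 - q ^ ((n : ℝ) + (x + s)))))
      ≤ Real.exp (Real.log (1 - q ^ x) * s) *
        Real.exp (∑' n : ℕ, (Real.log (1 - q ^ ((n : ℝ) + 1)) - Real.log (1 - q ^ ((n : ℝ) + x)))) := by
    rw [← Real.exp_add]
    apply Real.exp_le_exp.mpr
    rw [hT1, hT2]
    have := hsumineq
    rw [hdiff] at this
    linarith
  have e3 : (1:ℝ) - (x + s) = (1 - x) - s := by ring
  rw [e3, Real.rpow_sub hB, Real.div_rpow hA.le hB.le, Real.rpow_def_of_pos hA,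
    div_mul_eq_mul_div, div_mul_eq_mul_div,
    div_le_div_iff₀ (by positivity) (by positivity)]
  nlinarith [mul_le_mul_of_nonneg_left key
      (show (0:ℝ) ≤ (1 - q) ^ (1 - x) * (1 - q) ^ s by positivity),
    Real.exp_pos (∑' n : ℕ, (Real.log (1 - q ^ ((n : ℝ) + 1)) - Real.log (1 - q ^ ((n : ℝ) + (x + s))))),
    Real.exp_pos (∑' n : ℕ, (Real.log (1 - q ^ ((n : ℝ) + 1)) - Real.log (1 - q ^ ((n : ℝ) + x)))),
    Real.exp_pos (Real.log (1 - q ^ x) * s),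
    Real.rpow_pos_of_pos hB (1 - x), Real.rpow_pos_of_pos hB s]
end

section
/- Let q ∈ (0,1) and x > 0. Then √([x]_q) ≤ Γ_q(x+1) / Γ_q(x + 1/2) ≤ √([x + 1/2]_q). -/
lemma qs_pos {q : ℝ} (hq0 : 0 < q) (hq1 : q < 1) (c : ℝ) (hc : 0 < c) :
    0 < 1 - q ^ c := by
  have : q ^ c < 1 := Real.rpow_lt_one hq0.le hq1 hc
  linarith

lemma qs_summable {q : ℝ} (hq0 : 0 < q) (hq1 : q < 1) (c : ℝ) (hc : 0 < c) :
    Summable (fun n : ℕ => Real.log (1 - q ^ ((n : ℝ) + c))) := by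
  have hpos : ∀ n : ℕ, 0 < 1 - q ^ ((n : ℝ) + c) := fun n =>
    qs_pos hq0 hq1 _ (by positivity)
  have hqc : 0 < 1 - q ^ c := qs_pos hq0 hq1 c hc
  have key : Summable (fun n : ℕ => -Real.log (1 - q ^ ((n : ℝ) + c))) := by
    refine Summable.of_nonneg_of_le (fun n => ?_) (fun n => ?_)
      (Summable.mul_left (1 - q ^ c)⁻¹ (summable_geometric_of_lt_one hq0.le hq1))
    · have h1 : 0 < q ^ ((n : ℝ) + c) := by positivity
      simpa using Real.log_nonpos (by linarith [hpos n]) (by linarith)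
    · have h1 : q ^ ((n : ℝ) + c) = q ^ (n : ℕ) * q ^ c := by
        rw [Real.rpow_add hq0, Real.rpow_natCast]
      have hn1 : q ^ (n : ℕ) ≤ 1 := pow_le_one₀ hq0.le hq1.le
      have hn0 : (0:ℝ) ≤ q ^ (n : ℕ) := by positivity
      have hc1 : q ^ c ≤ 1 := by nlinarith
      have hu0 : 0 < q ^ ((n:ℝ) + c) := by positivity
      have hb : -Real.log (1 - q ^ ((n : ℝ) + c))
          ≤ (1 - q ^ ((n:ℝ) + c))⁻¹ - 1 := by
        have h2 := Real.log_le_sub_one_of_pos (inv_pos.mpr (hpos n))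
        rwa [Real.log_inv] at h2
      have he : (1 - q ^ ((n:ℝ) + c))⁻¹ - 1 = q ^ ((n:ℝ)+c) / (1 - q ^ ((n:ℝ)+c)) := by
        rw [eq_div_iff (hpos n).ne', sub_mul, inv_mul_cancel₀ (hpos n).ne']; ring
      have hle : q ^ ((n:ℝ)+c) ≤ q ^ (n:ℕ) := by
        rw [h1]; nlinarith
      have hd : q ^ ((n:ℝ)+c) / (1 - q ^ ((n:ℝ)+c)) ≤ q ^ (n:ℕ) / (1 - q ^ c) := by
        apply div_le_div₀ hn0 hle hqc
        rw [h1]; nlinarith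
      rw [inv_mul_eq_div]
      linarith
  simpa using key.neg

lemma qs_shift {q : ℝ} (hq0 : 0 < q) (hq1 : q < 1) (c : ℝ) (hc : 0 < c) :
    ∑' n : ℕ, Real.log (1 - q ^ ((n : ℝ) + c)) =
      Real.log (1 - q ^ c) + ∑' n : ℕ, Real.log (1 - q ^ ((n : ℝ) + (c + 1))) := by
  rw [Summable.tsum_eq_zero_add (qs_summable hq0 hq1 c hc)]
  congr 1
  · norm_num
  · apply tsum_congr; intro n
    congr 2
    push_cast; ring

lemma qs_term {q : ℝ} (hq0 : 0 < q) (hq1 : q < 1) (a : ℝ) (ha : 0 < a) :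
    Real.log (1 - q ^ a) + Real.log (1 - q ^ (a + 1)) ≤ 2 * Real.log (1 - q ^ (a + 1/2)) := by
  have h1 := qs_pos hq0 hq1 a ha
  have h2 := qs_pos hq0 hq1 (a + 1) (by linarith)
  have h3 := qs_pos hq0 hq1 (a + 1/2) (by linarith)
  set t := q ^ ((1:ℝ)/2) with ht
  have ht0 : 0 < t := Real.rpow_pos_of_pos hq0 _
  have ht2 : t * t = q := by
    rw [ht, ← Real.rpow_add hq0]; norm_num
  have e1 : q ^ (a + 1/2) = q ^ a * t := by rw [Real.rpow_add hq0]
  have e2 : q ^ (a + 1) = q ^ a * q := by rw [Real.rpow_add hq0, Real.rpow_one]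
  have hu : 0 < q ^ a := Real.rpow_pos_of_pos hq0 _
  have hprod : (1 - q ^ a) * (1 - q ^ (a + 1)) ≤ (1 - q ^ (a + 1/2)) * (1 - q ^ (a + 1/2)) := by
    rw [e1, e2]
    nlinarith [mul_nonneg hu.le (sq_nonneg (1 - t)), ht2]
  calc Real.log (1 - q ^ a) + Real.log (1 - q ^ (a + 1))
      = Real.log ((1 - q ^ a) * (1 - q ^ (a + 1))) := (Real.log_mul h1.ne' h2.ne').symm
    _ ≤ Real.log ((1 - q ^ (a + 1/2)) * (1 - q ^ (a + 1/2))) :=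
        Real.log_le_log (by positivity) hprod
    _ = 2 * Real.log (1 - q ^ (a + 1/2)) := by rw [Real.log_mul h3.ne' h3.ne']; ring

lemma qGamma_eq {q : ℝ} (hq0 : 0 < q) (hq1 : q < 1) (y : ℝ) (hy : 0 < y) :
    qGamma q y = (1 - q) ^ (1 - y) *
      Real.exp ((∑' n : ℕ, Real.log (1 - q ^ ((n : ℝ) + 1)))
        - ∑' n : ℕ, Real.log (1 - q ^ ((n : ℝ) + y))) := by
  have hpos : ∀ n : ℕ, 0 < (1 - q ^ ((n : ℝ) + 1)) / (1 - q ^ ((n : ℝ) + y)) := by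
    intro n
    exact div_pos (qs_pos hq0 hq1 _ (by positivity)) (qs_pos hq0 hq1 _ (by positivity))
  have hsum : Summable fun n : ℕ =>
      Real.log ((1 - q ^ ((n : ℝ) + 1)) / (1 - q ^ ((n : ℝ) + y))) := by
    apply Summable.congr (((qs_summable hq0 hq1 1 one_pos).sub (qs_summable hq0 hq1 y hy)))
    intro n
    rw [Real.log_div (qs_pos hq0 hq1 _ (by positivity)).ne' (qs_pos hq0 hq1 _ (by positivity)).ne']
  have h2 : Real.exp (∑' n : ℕ, Real.log ((1 - q ^ ((n : ℝ) + 1)) / (1 - q ^ ((n : ℝ) + y))))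
      = ∏' n : ℕ, (1 - q ^ ((n : ℝ) + 1)) / (1 - q ^ ((n : ℝ) + y)) := by
    exact Real.rexp_tsum_eq_tprod hpos hsum
  unfold qGamma
  rw [← h2]
  congr 1
  rw [← Summable.tsum_sub (qs_summable hq0 hq1 1 one_pos) (qs_summable hq0 hq1 y hy)]
  congr 1
  apply tsum_congr
  intro n
  rw [Real.log_div (qs_pos hq0 hq1 _ (by positivity)).ne' (qs_pos hq0 hq1 _ (by positivity)).ne']

theorem qSandor_inequality (q x : ℝ) (hq : q ∈ Set.Ioo (0 : ℝ) 1) (hx : 0 < x) :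
    Real.sqrt (qBracket q x) ≤ qGamma q (x + 1) / qGamma q (x + 1 / 2) ∧
    qGamma q (x + 1) / qGamma q (x + 1 / 2) ≤ Real.sqrt (qBracket q (x + 1 / 2)) := by
  obtain ⟨hq0, hq1⟩ := hq
  have hq' : 0 < 1 - q := by linarith
  have hx2 : 0 < x + 1/2 := by linarith
  have hx1 : 0 < x + 1 := by linarith
  have hx3 : 0 < x + 1/2 + 1 := by linarith
  set A := ∑' n : ℕ, Real.log (1 - q ^ ((n : ℝ) + x)) with hA
  set B := ∑' n : ℕ, Real.log (1 - q ^ ((n : ℝ) + (x + 1/2))) with hB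
  set C := ∑' n : ℕ, Real.log (1 - q ^ ((n : ℝ) + (x + 1))) with hC
  set B' := ∑' n : ℕ, Real.log (1 - q ^ ((n : ℝ) + (x + 1/2 + 1))) with hB'
  -- shifts
  have hshA : A = Real.log (1 - q ^ x) + C := qs_shift hq0 hq1 x hx
  have hshB : B = Real.log (1 - q ^ (x + 1/2)) + B' := qs_shift hq0 hq1 (x + 1/2) hx2
  -- termwise sums
  have hlow : A + C ≤ 2 * B := by
    have h1 : ∀ n : ℕ, Real.log (1 - q ^ ((n : ℝ) + x)) + Real.log (1 - q ^ ((n : ℝ) + (x + 1)))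
        ≤ 2 * Real.log (1 - q ^ ((n : ℝ) + (x + 1/2))) := by
      intro n
      have h := qs_term hq0 hq1 ((n : ℝ) + x) (by positivity)
      have e1 : (n : ℝ) + x + 1/2 = (n : ℝ) + (x + 1/2) := by ring
      have e2 : (n : ℝ) + x + 1 = (n : ℝ) + (x + 1) := by ring
      rw [e1, e2] at h
      exact h
    have h2 := Summable.tsum_le_tsum h1
      ((qs_summable hq0 hq1 x hx).add (qs_summable hq0 hq1 (x + 1) hx1))
      ((qs_summable hq0 hq1 (x + 1/2) hx2).mul_left 2)
    rwa [Summable.tsum_add (qs_summable hq0 hq1 x hx) (qs_summable hq0 hq1 (x + 1) hx1),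
      tsum_mul_left] at h2
  have hupp : B + B' ≤ 2 * C := by
    have h1 : ∀ n : ℕ, Real.log (1 - q ^ ((n : ℝ) + (x + 1/2)))
        + Real.log (1 - q ^ ((n : ℝ) + (x + 1/2 + 1)))
        ≤ 2 * Real.log (1 - q ^ ((n : ℝ) + (x + 1))) := by
      intro n
      have h := qs_term hq0 hq1 ((n : ℝ) + (x + 1/2)) (by positivity)
      have e1 : (n : ℝ) + (x + 1/2) + 1/2 = (n : ℝ) + (x + 1) := by ring
      have e2 : (n : ℝ) + (x + 1/2) + 1 = (n : ℝ) + (x + 1/2 + 1) := by ring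
      rw [e1, e2] at h
      exact h
    have h2 := Summable.tsum_le_tsum h1
      ((qs_summable hq0 hq1 (x + 1/2) hx2).add (qs_summable hq0 hq1 (x + 1/2 + 1) hx3))
      ((qs_summable hq0 hq1 (x + 1) hx1).mul_left 2)
    rwa [Summable.tsum_add (qs_summable hq0 hq1 (x + 1/2) hx2) (qs_summable hq0 hq1 (x + 1/2 + 1) hx3),
      tsum_mul_left] at h2
  have key1 : Real.log (1 - q ^ x) ≤ 2 * (B - C) := by linarith
  have key2 : 2 * (B - C) ≤ Real.log (1 - q ^ (x + 1/2)) := by linarith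
  -- ratio formula
  have hrat : qGamma q (x + 1) / qGamma q (x + 1/2)
      = (1 - q) ^ (-(1/2) : ℝ) * Real.exp (B - C) := by
    rw [qGamma_eq hq0 hq1 (x + 1) hx1, qGamma_eq hq0 hq1 (x + 1/2) hx2,
      mul_div_mul_comm, ← Real.rpow_sub hq', ← Real.exp_sub]
    congr 2
    · ring
    · ring
  have hpx := qs_pos hq0 hq1 x hx
  have hpx2 := qs_pos hq0 hq1 (x + 1/2) hx2
  have hbr : (0:ℝ) < (1 - q ^ x) / (1 - q) := div_pos hpx hq'
  have hbr2 : (0:ℝ) < (1 - q ^ (x + 1/2)) / (1 - q) := div_pos hpx2 hq'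
  have hexp : (1 - q) ^ (-(1/2) : ℝ) * Real.exp (B - C)
      = Real.exp (Real.log (1 - q) * (-(1/2)) + (B - C)) := by
    rw [Real.exp_add, Real.rpow_def_of_pos hq']
  have h1div : Real.log ((1 - q ^ x) / (1 - q)) = Real.log (1 - q ^ x) - Real.log (1 - q) :=
    Real.log_div hpx.ne' hq'.ne'
  have h2div : Real.log ((1 - q ^ (x + 1/2)) / (1 - q))
      = Real.log (1 - q ^ (x + 1/2)) - Real.log (1 - q) :=
    Real.log_div hpx2.ne' hq'.ne'
  constructor
  · rw [hrat, hexp]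
    unfold qBracket
    rw [Real.sqrt_eq_rpow, Real.rpow_def_of_pos hbr, Real.exp_le_exp, h1div]
    linarith
  · rw [hrat, hexp]
    unfold qBracket
    rw [Real.sqrt_eq_rpow, Real.rpow_def_of_pos hbr2, Real.exp_le_exp, h2div]
    linarith
end

section
/- Let q ∈ (0,1) be fixed and let x ∈ (0,1). Then 1/√(π_q) < Γ_q(x+1) / Γ_q(x + 1/2) < (1 + √q)/√(π_q), where π_q = (Γ_q(1/2))². -/
namespace QSandor

/-- log term -/
noncomputable def Lf (q a : ℝ) (n : ℕ) : ℝ := Real.log (1 - q ^ ((n : ℝ) + a))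

/-- log sum -/
noncomputable def Lsum (q a : ℝ) : ℝ := ∑' n, Lf q a n

variable {q : ℝ}

lemma pow_lt_one' (hq0 : 0 < q) (hq1 : q < 1) {c : ℝ} (hc : 0 < c) : q ^ c < 1 :=
  Real.rpow_lt_one hq0.le hq1 hc

lemma one_sub_pos (hq0 : 0 < q) (hq1 : q < 1) {c : ℝ} (hc : 0 < c) : 0 < 1 - q ^ c := by
  have := pow_lt_one' hq0 hq1 hc; linarith

lemma summable_Lf (hq0 : 0 < q) (hq1 : q < 1) {a : ℝ} (ha : 0 < a) : Summable (Lf q a) := by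
  have hqa : q ^ a < 1 := pow_lt_one' hq0 hq1 ha
  have hqa0 : 0 < q ^ a := Real.rpow_pos_of_pos hq0 a
  rw [← summable_neg_iff]
  apply Summable.of_nonneg_of_le (f := fun n : ℕ => (q ^ a / (1 - q ^ a)) * q ^ n)
  · intro n
    have hc : 0 < (n : ℝ) + a := by positivity
    have h1 : 0 < 1 - q ^ ((n : ℝ) + a) := one_sub_pos hq0 hq1 hc
    simp only [Lf, neg_nonneg]
    exact Real.log_nonpos (by linarith)
      (by linarith [Real.rpow_pos_of_pos hq0 ((n : ℝ) + a)])
  · intro n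
    have hc : 0 < (n : ℝ) + a := by positivity
    have ht0 : 0 < q ^ ((n : ℝ) + a) := Real.rpow_pos_of_pos hq0 _
    have h1 : 0 < 1 - q ^ ((n : ℝ) + a) := one_sub_pos hq0 hq1 hc
    have hle : q ^ ((n : ℝ) + a) = q ^ (n : ℕ) * q ^ a := by
      rw [Real.rpow_add hq0, Real.rpow_natCast]
    have hqn1 : q ^ (n : ℕ) ≤ 1 := pow_le_one₀ hq0.le hq1.le
    have ht_le : q ^ ((n : ℝ) + a) ≤ q ^ a := by
      rw [hle]; nlinarith [Real.rpow_pos_of_pos hq0 a]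
    have key : -Lf q a n ≤ q ^ ((n : ℝ) + a) / (1 - q ^ ((n : ℝ) + a)) := by
      have := Real.log_le_sub_one_of_pos (x := (1 - q ^ ((n : ℝ) + a))⁻¹) (by positivity)
      rw [Real.log_inv] at this
      have : -Real.log (1 - q ^ ((n : ℝ) + a)) ≤ (1 - q ^ ((n : ℝ) + a))⁻¹ - 1 := this
      simp only [Lf]
      calc -Real.log (1 - q ^ ((n : ℝ) + a)) ≤ (1 - q ^ ((n : ℝ) + a))⁻¹ - 1 := this
        _ = q ^ ((n : ℝ) + a) / (1 - q ^ ((n : ℝ) + a)) := by field_simp; ring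
    calc -Lf q a n ≤ q ^ ((n : ℝ) + a) / (1 - q ^ ((n : ℝ) + a)) := key
      _ ≤ q ^ ((n : ℝ) + a) / (1 - q ^ a) := by
          apply div_le_div_of_nonneg_left ht0.le (by linarith) (by linarith)
      _ = (q ^ a / (1 - q ^ a)) * q ^ n := by rw [hle]; ring
  · exact (summable_geometric_of_lt_one hq0.le hq1).mul_left _

lemma hasProd_exp {f : ℕ → ℝ} {s : ℝ} (h : HasSum f s) :
    HasProd (fun n => Real.exp (f n)) (Real.exp s) :=
  ((Real.continuous_exp.tendsto s).comp h).congr fun S => by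
    simp [Function.comp, Real.exp_sum]

lemma hasProd_F (hq0 : 0 < q) (hq1 : q < 1) {a : ℝ} (ha : 0 < a) :
    HasProd (fun n : ℕ => (1 - q ^ ((n : ℝ) + 1)) / (1 - q ^ ((n : ℝ) + a)))
      (Real.exp (Lsum q 1 - Lsum q a)) := by
  have h1 := summable_Lf hq0 hq1 (a := 1) one_pos
  have h2 := summable_Lf hq0 hq1 ha
  have hs : HasSum (fun n => Lf q 1 n - Lf q a n) (Lsum q 1 - Lsum q a) :=
    h1.hasSum.sub h2.hasSum
  have := hasProd_exp hs
  refine this.congr_fun fun n => ?_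
  have hp1 : 0 < 1 - q ^ ((n : ℝ) + 1) := one_sub_pos hq0 hq1 (by positivity)
  have hp2 : 0 < 1 - q ^ ((n : ℝ) + a) := one_sub_pos hq0 hq1 (by positivity)
  simp only [Lf]
  rw [Real.exp_sub, Real.exp_log hp1, Real.exp_log hp2]

lemma qGamma_eq (hq0 : 0 < q) (hq1 : q < 1) {a : ℝ} (ha : 0 < a) :
    qGamma q a = (1 - q) ^ (1 - a) * Real.exp (Lsum q 1 - Lsum q a) := by
  rw [qGamma, (hasProd_F hq0 hq1 ha).tprod_eq]

lemma Lsum_telescope (hq0 : 0 < q) (hq1 : q < 1) {a : ℝ} (ha : 0 < a) :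
    Lsum q a = Real.log (1 - q ^ a) + Lsum q (a + 1) := by
  have hs := summable_Lf hq0 hq1 ha
  rw [Lsum, Summable.tsum_eq_zero_add hs]
  congr 1
  · simp [Lf]
  · rw [Lsum]
    apply tsum_congr
    intro n
    simp only [Lf]
    norm_num
    ring_nf

lemma term_mono (hq0 : 0 < q) (hq1 : q < 1) {x y : ℝ} (hx : 0 ≤ x) (hxy : x < y)
    (n : ℕ) :
    Lf q (x + 1/2) n - Lf q (x + 1) n < Lf q (y + 1/2) n - Lf q (y + 1) n := by
  set s : ℝ := q ^ (1/2 : ℝ) with hs_def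
  have hs0 : 0 < s := Real.rpow_pos_of_pos hq0 _
  have hs1 : s < 1 := pow_lt_one' hq0 hq1 (by norm_num)
  have hssq : s * s = q := by
    rw [hs_def, ← Real.rpow_add hq0]; norm_num
  set u : ℝ := q ^ ((n : ℝ) + x) with hu_def
  set v : ℝ := q ^ ((n : ℝ) + y) with hv_def
  have hu0 : 0 < u := Real.rpow_pos_of_pos hq0 _
  have hv0 : 0 < v := Real.rpow_pos_of_pos hq0 _
  have hvu : v < u := Real.rpow_lt_rpow_of_exponent_gt hq0 hq1 (by linarith)
  have hu1 : u ≤ 1 := Real.rpow_le_one hq0.le hq1.le (by positivity)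
  have e1 : q ^ ((n : ℝ) + (x + 1/2)) = u * s := by
    rw [show (n : ℝ) + (x + 1/2) = ((n : ℝ) + x) + 1/2 by ring, Real.rpow_add hq0]
  have e2 : q ^ ((n : ℝ) + (x + 1)) = u * q := by
    rw [show (n : ℝ) + (x + 1) = ((n : ℝ) + x) + 1 by ring, Real.rpow_add hq0, Real.rpow_one]
  have e3 : q ^ ((n : ℝ) + (y + 1/2)) = v * s := by
    rw [show (n : ℝ) + (y + 1/2) = ((n : ℝ) + y) + 1/2 by ring, Real.rpow_add hq0]
  have e4 : q ^ ((n : ℝ) + (y + 1)) = v * q := by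
    rw [show (n : ℝ) + (y + 1) = ((n : ℝ) + y) + 1 by ring, Real.rpow_add hq0, Real.rpow_one]
  simp only [Lf, e1, e2, e3, e4]
  have p1 : 0 < 1 - u * s := by nlinarith
  have p2 : 0 < 1 - u * q := by nlinarith
  have p3 : 0 < 1 - v * s := by nlinarith
  have p4 : 0 < 1 - v * q := by nlinarith
  have hqs : q < s := by nlinarith
  have key : (1 - u * s) * (1 - v * q) < (1 - v * s) * (1 - u * q) := by
    nlinarith [mul_pos (sub_pos.2 hvu) (sub_pos.2 hqs)]
  have hlog : Real.log ((1 - u * s) * (1 - v * q)) < Real.log ((1 - v * s) * (1 - u * q)) :=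
    Real.log_lt_log (by positivity) key
  rw [Real.log_mul p1.ne' p4.ne', Real.log_mul p3.ne' p2.ne'] at hlog
  linarith

/-- strict monotonicity of S -/
lemma S_mono (hq0 : 0 < q) (hq1 : q < 1) {x y : ℝ} (hx : 0 ≤ x) (hxy : x < y) :
    Lsum q (x + 1/2) - Lsum q (x + 1) < Lsum q (y + 1/2) - Lsum q (y + 1) := by
  have s1 := summable_Lf hq0 hq1 (a := x + 1/2) (by linarith)
  have s2 := summable_Lf hq0 hq1 (a := x + 1) (by linarith)
  have s3 := summable_Lf hq0 hq1 (a := y + 1/2) (by linarith)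
  have s4 := summable_Lf hq0 hq1 (a := y + 1) (by linarith)
  have e1 : Lsum q (x + 1/2) - Lsum q (x + 1) = ∑' n, (Lf q (x + 1/2) n - Lf q (x + 1) n) :=
    (Summable.tsum_sub s1 s2).symm
  have e2 : Lsum q (y + 1/2) - Lsum q (y + 1) = ∑' n, (Lf q (y + 1/2) n - Lf q (y + 1) n) :=
    (Summable.tsum_sub s3 s4).symm
  rw [e1, e2]
  exact Summable.tsum_lt_tsum (i := 0) (fun n => (term_mono hq0 hq1 hx hxy n).le)
    (term_mono hq0 hq1 hx hxy 0) (s1.sub s2) (s3.sub s4)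

end QSandor


theorem qSandor_inequality_v2 (q x : ℝ) (hq : q ∈ Set.Ioo (0 : ℝ) 1)
    (hx : x ∈ Set.Ioo (0 : ℝ) 1) :
    1 / Real.sqrt ((qGamma q (1 / 2)) ^ 2) < qGamma q (x + 1) / qGamma q (x + 1 / 2) ∧
    qGamma q (x + 1) / qGamma q (x + 1 / 2) <
      (1 + Real.sqrt q) * (1 / Real.sqrt ((qGamma q (1 / 2)) ^ 2)) := by
  obtain ⟨hq0, hq1⟩ := hq
  obtain ⟨hx0, hx1⟩ := hx
  have h1q : 0 < 1 - q := by linarith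
  have hG : qGamma q (1 / 2) = (1 - q) ^ (1 - (1/2 : ℝ)) * Real.exp (QSandor.Lsum q 1 - QSandor.Lsum q (1/2)) :=
    QSandor.qGamma_eq hq0 hq1 (by norm_num)
  have hA : qGamma q (x + 1) = (1 - q) ^ (1 - (x + 1)) * Real.exp (QSandor.Lsum q 1 - QSandor.Lsum q (x + 1)) :=
    QSandor.qGamma_eq hq0 hq1 (by linarith)
  have hB : qGamma q (x + 1/2) =
      (1 - q) ^ (1 - (x + 1/2)) * Real.exp (QSandor.Lsum q 1 - QSandor.Lsum q (x + 1/2)) :=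
    QSandor.qGamma_eq hq0 hq1 (by linarith)
  have hGpos : 0 < qGamma q (1 / 2) := by rw [hG]; positivity
  have hsqrt : Real.sqrt ((qGamma q (1 / 2)) ^ 2) = qGamma q (1 / 2) :=
    Real.sqrt_sq hGpos.le
  have hrp : (1 - q) ^ (1 - (x + 1)) * (1 - q) ^ (1 - (1/2 : ℝ)) =
      (1 - q) ^ (1 - (x + 1/2)) := by
    rw [← Real.rpow_add h1q]; ring_nf
  have key : qGamma q (x + 1) / qGamma q (x + 1/2) * qGamma q (1 / 2) =
      Real.exp ((QSandor.Lsum q (x + 1/2) - QSandor.Lsum q (x + 1)) + (QSandor.Lsum q 1 - QSandor.Lsum q (1/2))) := by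
    rw [hA, hB, hG, div_mul_eq_mul_div, div_eq_iff (by positivity), mul_mul_mul_comm, hrp,
      ← Real.exp_add, mul_left_comm, ← Real.exp_add]
    congr 1
    ring
  -- lower bound
  have h01 := QSandor.S_mono hq0 hq1 (le_refl 0) hx0
  rw [zero_add, zero_add] at h01
  have hSm1 := QSandor.S_mono hq0 hq1 hx0.le hx1
  -- telescoping values
  have t1 : QSandor.Lsum q (1/2) = Real.log (1 - q ^ ((1:ℝ)/2)) + QSandor.Lsum q (1/2 + 1) :=
    QSandor.Lsum_telescope hq0 hq1 (by norm_num)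
  have t2 : QSandor.Lsum q 1 = Real.log (1 - q ^ (1:ℝ)) + QSandor.Lsum q (1 + 1) :=
    QSandor.Lsum_telescope hq0 hq1 one_pos
  rw [show ((1:ℝ)/2 + 1) = 1 + 1/2 by norm_num] at t1
  rw [Real.rpow_one] at t2
  have hsq : Real.sqrt q * Real.sqrt q = q := Real.mul_self_sqrt hq0.le
  have hsqnn : 0 ≤ Real.sqrt q := Real.sqrt_nonneg q
  have hsql1 : Real.sqrt q < 1 := by nlinarith
  have hrs : q ^ ((1:ℝ)/2) = Real.sqrt q := (Real.sqrt_eq_rpow q).symm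
  rw [hrs] at t1
  have hlogmul : Real.log (1 - q) =
      Real.log (1 - Real.sqrt q) + Real.log (1 + Real.sqrt q) := by
    rw [show (1:ℝ) - q = (1 - Real.sqrt q) * (1 + Real.sqrt q) by linear_combination hsq,
      Real.log_mul (by nlinarith) (by nlinarith)]
  have hval : QSandor.Lsum q (1 + 1/2) - QSandor.Lsum q (1 + 1) +
      (QSandor.Lsum q 1 - QSandor.Lsum q (1/2)) = Real.log (1 + Real.sqrt q) := by
    rw [t1, t2, hlogmul]; ring
  constructor
  · rw [hsqrt, div_lt_iff₀ hGpos, key]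
    calc (1:ℝ) = Real.exp 0 := Real.exp_zero.symm
      _ < _ := Real.exp_lt_exp.2 (by linarith)
  · rw [hsqrt, mul_one_div, lt_div_iff₀ hGpos, key]
    calc Real.exp ((QSandor.Lsum q (x + 1/2) - QSandor.Lsum q (x + 1)) + (QSandor.Lsum q 1 - QSandor.Lsum q (1/2)))
        < Real.exp (Real.log (1 + Real.sqrt q)) :=
          Real.exp_lt_exp.2 (by linarith [hSm1, hval])
      _ = 1 + Real.sqrt q := Real.exp_log (by linarith)
end

section
/- Let q ∈ (0,1) and s ∈ (0,1). Then the limit as x → ∞ of Γ_q(x+s) / ([x]_q^s · Γ_q(x)) equals 1. -/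
open Real Filter

section aux

variable {q : ℝ}

/-- `L q t = ∑' n, log (1 - q^(n+t))`. -/
noncomputable def qL (q t : ℝ) : ℝ := ∑' n : ℕ, Real.log (1 - q ^ ((n : ℝ) + t))

lemma qu_pos (hq0 : 0 < q) (t : ℝ) (n : ℕ) : 0 < q ^ ((n : ℝ) + t) :=
  Real.rpow_pos_of_pos hq0 _

lemma qu_lt_one (hq0 : 0 < q) (hq1 : q < 1) {t : ℝ} (ht : 0 < t) (n : ℕ) :
    q ^ ((n : ℝ) + t) < 1 := by
  have h : (0 : ℝ) < (n : ℝ) + t := by positivity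
  calc q ^ ((n : ℝ) + t) < q ^ (0 : ℝ) :=
        Real.rpow_lt_rpow_of_exponent_gt hq0 hq1 h
    _ = 1 := Real.rpow_zero q

lemma qu_le (hq0 : 0 < q) (hq1 : q < 1) (t : ℝ) (n : ℕ) :
    q ^ ((n : ℝ) + t) ≤ q ^ t :=
  Real.rpow_le_rpow_of_exponent_ge hq0 hq1.le (by simp [Nat.cast_nonneg])

lemma qu_summable (hq0 : 0 < q) (hq1 : q < 1) (t : ℝ) :
    Summable (fun n : ℕ => q ^ ((n : ℝ) + t)) := by
  have : (fun n : ℕ => q ^ ((n : ℝ) + t)) = fun n : ℕ => q ^ n * q ^ t := by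
    funext n
    rw [Real.rpow_add hq0, Real.rpow_natCast]
  rw [this]
  exact (summable_geometric_of_lt_one hq0.le hq1).mul_right _

lemma qu_tsum (hq0 : 0 < q) (hq1 : q < 1) (t : ℝ) :
    ∑' n : ℕ, q ^ ((n : ℝ) + t) = (1 - q)⁻¹ * q ^ t := by
  have : (fun n : ℕ => q ^ ((n : ℝ) + t)) = fun n : ℕ => q ^ n * q ^ t := by
    funext n
    rw [Real.rpow_add hq0, Real.rpow_natCast]
  rw [this, tsum_mul_right, tsum_geometric_of_lt_one hq0.le hq1, mul_comm]

lemma neg_log_one_sub_le {u c : ℝ} (hu0 : 0 < u) (huc : u ≤ c) (hc : c < 1) :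
    -Real.log (1 - u) ≤ (1 - c)⁻¹ * u := by
  have h1u : 0 < 1 - u := by linarith
  have h1c : 0 < 1 - c := by linarith
  have h := Real.log_le_sub_one_of_pos (x := (1 - u)⁻¹) (by positivity)
  rw [Real.log_inv] at h
  have h2 : (1 - u)⁻¹ - 1 = u / (1 - u) := by field_simp; ring
  rw [h2] at h
  have h3 : u / (1 - u) ≤ u / (1 - c) := by
    apply div_le_div_of_nonneg_left hu0.le h1c (by linarith)
  calc -Real.log (1 - u) ≤ u / (1 - u) := h
    _ ≤ u / (1 - c) := h3
    _ = (1 - c)⁻¹ * u := by rw [div_eq_inv_mul]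

lemma qL_summable (hq0 : 0 < q) (hq1 : q < 1) {t : ℝ} (ht : 0 < t) :
    Summable (fun n : ℕ => Real.log (1 - q ^ ((n : ℝ) + t))) := by
  have hqt1 : q ^ t < 1 := by
    have := qu_lt_one hq0 hq1 ht 0
    simpa using this
  have hneg : Summable (fun n : ℕ => -Real.log (1 - q ^ ((n : ℝ) + t))) := by
    apply Summable.of_nonneg_of_le
    · intro n
      have h1 : q ^ ((n : ℝ) + t) < 1 := qu_lt_one hq0 hq1 ht n
      have : Real.log (1 - q ^ ((n : ℝ) + t)) ≤ 0 :=
        Real.log_nonpos (by linarith [qu_lt_one hq0 hq1 ht n]) (by linarith [qu_pos hq0 t n])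
      linarith
    · intro n
      exact neg_log_one_sub_le (qu_pos hq0 t n) (qu_le hq0 hq1 t n) hqt1
    · exact ((qu_summable hq0 hq1 t).mul_left _)
  simpa using hneg.neg

lemma qL_nonpos (hq0 : 0 < q) (hq1 : q < 1) {t : ℝ} (ht : 0 < t) : qL q t ≤ 0 := by
  apply tsum_nonpos
  intro n
  exact Real.log_nonpos (by linarith [qu_lt_one hq0 hq1 ht n]) (by linarith [qu_pos hq0 t n])

lemma qL_lower (hq0 : 0 < q) (hq1 : q < 1) {t : ℝ} (ht : 0 < t) :
    -((1 - q ^ t)⁻¹ * ((1 - q)⁻¹ * q ^ t)) ≤ qL q t := by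
  have hqt1 : q ^ t < 1 := by simpa using qu_lt_one hq0 hq1 ht 0
  have h : ∀ n : ℕ, -((1 - q ^ t)⁻¹ * q ^ ((n : ℝ) + t)) ≤
      Real.log (1 - q ^ ((n : ℝ) + t)) := by
    intro n
    have := neg_log_one_sub_le (qu_pos hq0 t n) (qu_le hq0 hq1 t n) hqt1
    linarith
  have hsum1 : Summable (fun n : ℕ => -((1 - q ^ t)⁻¹ * q ^ ((n : ℝ) + t))) :=
    ((qu_summable hq0 hq1 t).mul_left _).neg
  have := Summable.tsum_le_tsum h hsum1 (qL_summable hq0 hq1 ht)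
  calc -((1 - q ^ t)⁻¹ * ((1 - q)⁻¹ * q ^ t))
      = ∑' n : ℕ, -((1 - q ^ t)⁻¹ * q ^ ((n : ℝ) + t)) := by
        rw [tsum_neg, tsum_mul_left, qu_tsum hq0 hq1]
    _ ≤ qL q t := this

lemma qGamma_eq_s6 (hq0 : 0 < q) (hq1 : q < 1) {t : ℝ} (ht : 0 < t) :
    qGamma q t = (1 - q) ^ (1 - t) * Real.exp (qL q 1 - qL q t) := by
  unfold qGamma
  congr 1
  have hpos : ∀ n : ℕ, 0 < (1 - q ^ ((n : ℝ) + 1)) / (1 - q ^ ((n : ℝ) + t)) := by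
    intro n
    apply div_pos
    · linarith [qu_lt_one hq0 hq1 one_pos n]
    · linarith [qu_lt_one hq0 hq1 ht n]
  have hlog : ∀ n : ℕ, Real.log ((1 - q ^ ((n : ℝ) + 1)) / (1 - q ^ ((n : ℝ) + t)))
      = Real.log (1 - q ^ ((n : ℝ) + 1)) - Real.log (1 - q ^ ((n : ℝ) + t)) := by
    intro n
    exact Real.log_div (by linarith [qu_lt_one hq0 hq1 one_pos n, qu_pos hq0 1 n])
      (by linarith [qu_lt_one hq0 hq1 ht n, qu_pos hq0 t n])
  have hsum : Summable fun n : ℕ =>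
      Real.log ((1 - q ^ ((n : ℝ) + 1)) / (1 - q ^ ((n : ℝ) + t))) := by
    simp only [hlog]
    exact (qL_summable hq0 hq1 one_pos).sub (qL_summable hq0 hq1 ht)
  have key := Real.rexp_tsum_eq_tprod
    (f := fun (n : ℕ) => (1 - q ^ ((n : ℝ) + 1)) / (1 - q ^ ((n : ℝ) + t)))
    hpos hsum
  have key' := key
  rw [← key']
  congr 1
  rw [show qL q 1 - qL q t = ∑' n : ℕ, (Real.log (1 - q ^ ((n : ℝ) + 1)) -
      Real.log (1 - q ^ ((n : ℝ) + t))) from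
    (Summable.tsum_sub (qL_summable hq0 hq1 one_pos) (qL_summable hq0 hq1 ht)).symm]
  exact tsum_congr fun n => hlog n

lemma qL_tendsto (hq0 : 0 < q) (hq1 : q < 1) :
    Tendsto (fun x : ℝ => qL q x) atTop (nhds 0) := by
  have hq : Tendsto (fun x : ℝ => q ^ x) atTop (nhds 0) :=
    tendsto_rpow_atTop_of_base_lt_one q (by linarith) hq1
  have hlow : Tendsto (fun x : ℝ => -(2 * ((1 - q)⁻¹ * q ^ x))) atTop (nhds 0) := by
    have := (hq.const_mul ((1 - q)⁻¹)).const_mul 2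
    simpa using this.neg
  apply tendsto_of_tendsto_of_tendsto_of_le_of_le' hlow tendsto_const_nhds
  · filter_upwards [eventually_gt_atTop (0 : ℝ),
      hq.eventually_le_const (show (0:ℝ) < 1/2 by norm_num)] with x hx hx2
    have hqt1 : q ^ x < 1 := by linarith [Real.rpow_pos_of_pos hq0 x]
    have h1 : (1 - q ^ x)⁻¹ ≤ 2 := by
      rw [inv_le_comm₀ (by linarith) (by norm_num)]
      linarith
    have h2 := qL_lower hq0 hq1 hx
    have h3 : (1 - q ^ x)⁻¹ * ((1 - q)⁻¹ * q ^ x) ≤ 2 * ((1 - q)⁻¹ * q ^ x) := by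
      apply mul_le_mul_of_nonneg_right h1
      exact mul_nonneg (inv_nonneg.mpr (by linarith)) (Real.rpow_pos_of_pos hq0 x).le
    linarith
  · filter_upwards [eventually_gt_atTop (0 : ℝ)] with x hx
    exact qL_nonpos hq0 hq1 hx

end aux

theorem qWendel_limit (q s : ℝ) (hq : q ∈ Set.Ioo (0 : ℝ) 1)
    (hs : s ∈ Set.Ioo (0 : ℝ) 1) :
    Filter.Tendsto (fun x : ℝ => qGamma q (x + s) / (qBracket q x ^ s * qGamma q x))
      Filter.atTop (nhds 1) := by
  obtain ⟨hq0, hq1⟩ := hq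
  obtain ⟨hs0, hs1⟩ := hs
  have hc : (0 : ℝ) < 1 - q := by linarith
  -- the limit of the exponent expression
  have hqx : Tendsto (fun x : ℝ => q ^ x) atTop (nhds 0) :=
    tendsto_rpow_atTop_of_base_lt_one q (by linarith) hq1
  have hlog0 : Tendsto (fun x : ℝ => s * Real.log (1 - q ^ x)) atTop (nhds 0) := by
    have h1 : Tendsto (fun x : ℝ => 1 - q ^ x) atTop (nhds 1) := by
      simpa using (tendsto_const_nhds (x := (1:ℝ))).sub hqx
    have h2 : Tendsto (fun x : ℝ => Real.log (1 - q ^ x)) atTop (nhds 0) := by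
      have := (Real.continuousAt_log (by norm_num : (1:ℝ) ≠ 0)).tendsto.comp h1
      simpa [Function.comp_def] using this
    simpa using h2.const_mul s
  have hL : Tendsto (fun x : ℝ => qL q x) atTop (nhds 0) := qL_tendsto hq0 hq1
  have hLs : Tendsto (fun x : ℝ => qL q (x + s)) atTop (nhds 0) :=
    hL.comp (tendsto_atTop_add_const_right atTop s tendsto_id)
  have hexp : Tendsto
      (fun x : ℝ => Real.exp (qL q x - qL q (x + s) - s * Real.log (1 - q ^ x)))
      atTop (nhds 1) := by
    have h := (hL.sub hLs).sub hlog0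
    rw [show (0:ℝ) - 0 - 0 = 0 by ring] at h
    have := (Real.continuous_exp.tendsto 0).comp h
    simpa [Function.comp_def] using this
  apply hexp.congr'
  filter_upwards [eventually_gt_atTop (0 : ℝ)] with x hx
  have hxs : 0 < x + s := by linarith
  have hqxlt : q ^ x < 1 := by
    simpa using qu_lt_one hq0 hq1 hx 0
  have hqxpos : 0 < q ^ x := Real.rpow_pos_of_pos hq0 x
  have hb : (0 : ℝ) < 1 - q ^ x := by linarith
  rw [qGamma_eq_s6 hq0 hq1 hx, qGamma_eq_s6 hq0 hq1 hxs]
  unfold qBracket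
  rw [Real.div_rpow hb.le hc.le]
  have e1 : (1 - q) ^ (1 - (x + s)) = (1 - q) ^ (1 - x) * ((1 - q) ^ s)⁻¹ := by
    rw [← Real.rpow_neg hc.le, ← Real.rpow_add hc]
    ring_nf
  have e2 : (1 - q ^ x) ^ s = Real.exp (s * Real.log (1 - q ^ x)) := by
    rw [Real.rpow_def_of_pos hb, mul_comm]
  rw [e1, e2]
  have hcx : (1 - q) ^ (1 - x) ≠ 0 := (Real.rpow_pos_of_pos hc _).ne'
  have hcs : (1 - q) ^ s ≠ 0 := (Real.rpow_pos_of_pos hc _).ne'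
  rw [eq_comm]
  field_simp
  have hkey : ∀ a b c d : ℝ, Real.exp a * (Real.exp b * (d * Real.exp c)) =
      d * Real.exp (a + b + c) := by
    intro a b c d
    rw [Real.exp_add, Real.exp_add]; ring
  rw [← Real.exp_add, ← Real.exp_add]
  have harg : qL q x - qL q (x + s) - s * Real.log (1 - q ^ x) + s * Real.log (1 - q ^ x) +
      (qL q 1 - qL q x) = qL q 1 - qL q (x + s) := by ring
  congr 1; ring
end

section
/- Let q ∈ (0,1) and α, β ∈ (0,1). Then the limit as x → ∞ of [x]_q^{β-α} · Γ_q(x+α) / Γ_q(x+β) equals 1. -/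
open Real Filter

private lemma qW_log_lb {t : ℝ} (h0 : 0 ≤ t) (h2 : t ≤ 1/2) : -(2*t) ≤ Real.log (1-t) := by
  have h1 : 0 < 1 - t := by linarith
  have hl := Real.one_sub_inv_le_log_of_pos h1
  have hinv : (1 - t)⁻¹ ≤ 1 + 2 * t := by
    have : 1 / (1 - t) ≤ 1 + 2 * t := by
      rw [div_le_iff₀ h1]; nlinarith
    simpa [one_div] using this
  linarith

/-- tsum of the logs. -/
noncomputable def qW_L (q y : ℝ) : ℝ := ∑' n : ℕ, Real.log (1 - q ^ ((n : ℝ) + y))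

private lemma qW_rpow_eq {q : ℝ} (hq0 : 0 < q) (n : ℕ) (y : ℝ) :
    q ^ ((n : ℝ) + y) = q ^ n * q ^ y := by
  rw [Real.rpow_add hq0, Real.rpow_natCast]

private lemma qW_t_mem {q : ℝ} (hq0 : 0 < q) (hq1 : q < 1) (n : ℕ) {y : ℝ} (hy : 0 < y) :
    0 < q ^ ((n : ℝ) + y) ∧ q ^ ((n : ℝ) + y) ≤ q ^ y := by
  constructor
  · exact Real.rpow_pos_of_pos hq0 _
  · rw [qW_rpow_eq hq0]
    calc q ^ n * q ^ y ≤ 1 * q ^ y := by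
          apply mul_le_mul_of_nonneg_right _ (Real.rpow_pos_of_pos hq0 y).le
          exact pow_le_one₀ hq0.le hq1.le
      _ = q ^ y := one_mul _

private lemma qW_summable_log {q : ℝ} (hq0 : 0 < q) (hq1 : q < 1) {y : ℝ} (hy : 0 < y) :
    Summable (fun n : ℕ => Real.log (1 - q ^ ((n : ℝ) + y))) := by
  have hgeo : Summable (fun n : ℕ => (2 * q ^ y) * q ^ n) :=
    (summable_geometric_of_lt_one hq0.le hq1).mul_left _
  apply Summable.of_norm_bounded_eventually_nat hgeo
  have htend : Filter.Tendsto (fun n : ℕ => q ^ ((n : ℝ) + y)) atTop (nhds 0) := by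
    have : Filter.Tendsto (fun n : ℕ => q ^ n * q ^ y) atTop (nhds (0 * q ^ y)) :=
      (tendsto_pow_atTop_nhds_zero_of_lt_one hq0.le hq1).mul_const _
    simp only [zero_mul] at this
    exact this.congr (fun n => (qW_rpow_eq hq0 n y).symm)
  have hev : ∀ᶠ n : ℕ in atTop, q ^ ((n : ℝ) + y) ≤ 1/2 :=
    htend.eventually_le_const (by norm_num)
  filter_upwards [hev] with n hn
  set t := q ^ ((n : ℝ) + y) with ht
  have ht0 : 0 < t := Real.rpow_pos_of_pos hq0 _
  have hlog0 : Real.log (1 - t) ≤ 0 := Real.log_nonpos (by linarith) (by linarith)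
  have hlb : -(2 * t) ≤ Real.log (1 - t) := qW_log_lb ht0.le hn
  rw [Real.norm_eq_abs, abs_of_nonpos hlog0]
  rw [qW_rpow_eq hq0] at ht
  nlinarith [ht0]

private lemma qW_hasProd {q : ℝ} (hq0 : 0 < q) (hq1 : q < 1) {y : ℝ} (hy : 0 < y) :
    HasProd (fun n : ℕ => 1 - q ^ ((n : ℝ) + y)) (Real.exp (qW_L q y)) := by
  have hs := (qW_summable_log hq0 hq1 hy).hasSum
  have h := hs.rexp
  have heq : (Real.exp ∘ fun n : ℕ => Real.log (1 - q ^ ((n : ℝ) + y)))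
      = fun n : ℕ => 1 - q ^ ((n : ℝ) + y) := by
    funext n
    have hlt : q ^ ((n : ℝ) + y) < 1 :=
      Real.rpow_lt_one hq0.le hq1 (by positivity)
    exact Real.exp_log (by linarith)
  rw [heq] at h
  exact h

private lemma qW_hasProd_div {f g : ℕ → ℝ} {a b : ℝ} (hf : HasProd f a) (hg : HasProd g b)
    (hb : b ≠ 0) : HasProd (fun n => f n / g n) (a / b) := by
  have := Filter.Tendsto.div hf hg hb
  simpa [HasProd, Finset.prod_div_distrib, Pi.div_def] using this

private lemma qW_gamma_eq {q : ℝ} (hq0 : 0 < q) (hq1 : q < 1) {y : ℝ} (hy : 0 < y) :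
    qGamma q y = (1 - q) ^ (1 - y) * (Real.exp (qW_L q 1) / Real.exp (qW_L q y)) := by
  unfold qGamma
  congr 1
  exact (qW_hasProd_div (qW_hasProd hq0 hq1 one_pos) (qW_hasProd hq0 hq1 hy)
    (Real.exp_ne_zero _)).tprod_eq

private lemma qW_tendsto_L {q : ℝ} (hq0 : 0 < q) (hq1 : q < 1) :
    Filter.Tendsto (qW_L q) atTop (nhds 0) := by
  have hq1' : 0 < 1 - q := by linarith
  have hqx : Filter.Tendsto (fun y : ℝ => q ^ y) atTop (nhds 0) :=
    tendsto_rpow_atTop_of_base_lt_one q (by linarith) hq1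
  have hlo : Filter.Tendsto (fun y : ℝ => -(2 * q ^ y * (1 - q)⁻¹)) atTop (nhds 0) := by
    have := ((hqx.const_mul 2).mul_const (1 - q)⁻¹).neg
    simpa using this
  apply tendsto_of_tendsto_of_tendsto_of_le_of_le' hlo tendsto_const_nhds
  · -- lower bound eventually
    have hev : ∀ᶠ y : ℝ in atTop, q ^ y ≤ 1/2 := hqx.eventually_le_const (by norm_num)
    filter_upwards [hev, eventually_gt_atTop (0:ℝ)] with y h12 hy
    have hsumlog := qW_summable_log hq0 hq1 hy
    have hsumgeo : Summable (fun n : ℕ => -(2 * q ^ y) * q ^ n) :=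
      (summable_geometric_of_lt_one hq0.le hq1).mul_left _
    have hterm : ∀ n : ℕ, -(2 * q ^ y) * q ^ n ≤ Real.log (1 - q ^ ((n : ℝ) + y)) := by
      intro n
      obtain ⟨ht0, hty⟩ := qW_t_mem hq0 hq1 n hy
      have hlb := qW_log_lb ht0.le (hty.trans h12)
      rw [qW_rpow_eq hq0] at hlb ⊢
      nlinarith
    have := Summable.tsum_le_tsum hterm hsumgeo hsumlog
    calc -(2 * q ^ y * (1 - q)⁻¹) = ∑' n : ℕ, -(2 * q ^ y) * q ^ n := by
          rw [tsum_mul_left, tsum_geometric_of_lt_one hq0.le hq1]; ring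
      _ ≤ qW_L q y := this
  · -- upper bound eventually
    filter_upwards [eventually_gt_atTop (0:ℝ)] with y hy
    have : 0 ≤ ∑' n : ℕ, -Real.log (1 - q ^ ((n : ℝ) + y)) := by
      apply tsum_nonneg
      intro n
      have hlt : q ^ ((n : ℝ) + y) < 1 := Real.rpow_lt_one hq0.le hq1 (by positivity)
      have := Real.log_nonpos (x := 1 - q ^ ((n : ℝ) + y)) (by linarith [(qW_t_mem hq0 hq1 n hy).1]) (by linarith [(qW_t_mem hq0 hq1 n hy).1])
      linarith
    rw [tsum_neg] at this
    unfold qW_L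
    linarith

theorem qWendel_limit2 (q α β : ℝ) (hq : q ∈ Set.Ioo (0 : ℝ) 1)
    (hα : α ∈ Set.Ioo (0 : ℝ) 1) (hβ : β ∈ Set.Ioo (0 : ℝ) 1) :
    Filter.Tendsto (fun x : ℝ => qBracket q x ^ (β - α) * qGamma q (x + α) / qGamma q (x + β))
      Filter.atTop (nhds 1) := by
  obtain ⟨hq0, hq1⟩ := hq
  have hq1' : 0 < 1 - q := by linarith
  have hqx : Filter.Tendsto (fun x : ℝ => q ^ x) atTop (nhds 0) :=
    tendsto_rpow_atTop_of_base_lt_one q (by linarith) hq1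
  -- limit of first factor
  have h1 : Filter.Tendsto (fun x : ℝ => (1 - q ^ x) ^ (β - α)) atTop (nhds 1) := by
    have hb : Filter.Tendsto (fun x : ℝ => 1 - q ^ x) atTop (nhds 1) := by
      have := (tendsto_const_nhds (α := ℝ) (x := (1:ℝ))).sub hqx
      simpa using this
    have := hb.rpow_const (p := β - α) (Or.inl one_ne_zero)
    simpa using this
  -- limit of second factor
  have hLa : Filter.Tendsto (fun x : ℝ => qW_L q (x + α)) atTop (nhds 0) :=
    (qW_tendsto_L hq0 hq1).comp (tendsto_atTop_add_const_right _ α tendsto_id)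
  have hLb : Filter.Tendsto (fun x : ℝ => qW_L q (x + β)) atTop (nhds 0) :=
    (qW_tendsto_L hq0 hq1).comp (tendsto_atTop_add_const_right _ β tendsto_id)
  have h2 : Filter.Tendsto (fun x : ℝ => Real.exp (qW_L q (x + β) - qW_L q (x + α)))
      atTop (nhds 1) := by
    have := (hLb.sub hLa).rexp
    simpa using this
  have hmul : Filter.Tendsto
      (fun x : ℝ => (1 - q ^ x) ^ (β - α) * Real.exp (qW_L q (x + β) - qW_L q (x + α)))
      atTop (nhds 1) := by
    have := h1.mul h2
    simpa using this
  refine hmul.congr' ?_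
  filter_upwards [eventually_gt_atTop (0:ℝ)] with x hx
  have hxa : 0 < x + α := by linarith [hα.1]
  have hxb : 0 < x + β := by linarith [hβ.1]
  have hqxlt : q ^ x < 1 := Real.rpow_lt_one hq0.le hq1 hx
  have hqxpos : 0 < q ^ x := Real.rpow_pos_of_pos hq0 x
  rw [qW_gamma_eq hq0 hq1 hxa, qW_gamma_eq hq0 hq1 hxb, qBracket]
  have hdiv : ((1 - q ^ x) / (1 - q)) ^ (β - α)
      = (1 - q ^ x) ^ (β - α) / (1 - q) ^ (β - α) :=
    Real.div_rpow (by linarith) (by linarith) _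
  have hA : (1 - q) ^ (1 - (x + α)) = (1 - q) ^ (1 - (x + β)) * (1 - q) ^ (β - α) := by
    rw [← Real.rpow_add hq1']
    ring_nf
  rw [hdiv, hA, Real.exp_sub]
  have e1 : (0:ℝ) < (1 - q) ^ (β - α) := Real.rpow_pos_of_pos hq1' _
  have e2 : (0:ℝ) < (1 - q) ^ (1 - (x + β)) := Real.rpow_pos_of_pos hq1' _
  have e3 : (0:ℝ) < Real.exp (qW_L q (x + α)) := Real.exp_pos _
  have e4 : (0:ℝ) < Real.exp (qW_L q (x + β)) := Real.exp_pos _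
  have e5 : (0:ℝ) < Real.exp (qW_L q 1) := Real.exp_pos _
  field_simp
end

section
/- Let q ∈ (0,1) be fixed. Then the function F defined for x > 0 by F(x) = [x]_q^{-1/2} · Γ_q(x+1) / Γ_q(x + 1/2) is strictly decreasing on (0,∞) and tends to 1 as x → ∞; consequently F(x) > 1 for all x > 0. -/
open Real Filter

namespace QGammaAux
set_option maxHeartbeats 1000000

/-- `-log(1-u) ≤ u/(1-u)` for `0 ≤ u < 1`. -/
lemma neg_log_one_sub_le {u : ℝ} (hu : 0 ≤ u) (hu1 : u < 1) :
    -Real.log (1 - u) ≤ u / (1 - u) := by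
  have h1 : 0 < 1 - u := by linarith
  have := Real.log_le_sub_one_of_pos (inv_pos.mpr h1)
  rw [Real.log_inv] at this
  have : -Real.log (1 - u) ≤ (1 - u)⁻¹ - 1 := by linarith
  refine this.trans ?_
  rw [div_eq_mul_inv]
  have : (1-u)⁻¹ - 1 = u * (1-u)⁻¹ := by
    field_simp
    ring
  linarith [this.le]

lemma summable_log_aux {q a : ℝ} (hq0 : 0 < q) (hq1 : q < 1) (ha : 0 ≤ a) (ha1 : a < 1) :
    Summable (fun n : ℕ => Real.log (1 - a * q ^ n)) := by
  rw [← summable_neg_iff]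
  have key : ∀ n : ℕ, 0 < 1 - a * q ^ n := by
    intro n
    have h1 : q ^ n ≤ 1 := pow_le_one₀ hq0.le hq1.le
    have h2 : 0 ≤ q ^ n := pow_nonneg hq0.le n
    nlinarith
  refine Summable.of_nonneg_of_le ?_ ?_ (Summable.mul_left (a / (1-a)) (summable_geometric_of_lt_one hq0.le hq1))
  · intro n
    simp only [neg_nonneg]
    apply Real.log_nonpos
    · nlinarith [key n, pow_nonneg hq0.le n, pow_le_one₀ hq0.le hq1.le (n := n), mul_nonneg ha (pow_nonneg hq0.le n)]
    · nlinarith [mul_nonneg ha (pow_nonneg hq0.le n)]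
  · intro n
    have h1 : q ^ n ≤ 1 := pow_le_one₀ hq0.le hq1.le
    have h2 : 0 ≤ q ^ n := pow_nonneg hq0.le n
    have hle : a * q ^ n ≤ a := by nlinarith
    have h3 : a * q ^ n < 1 := lt_of_le_of_lt hle ha1
    have h4 : 0 ≤ a * q ^ n := mul_nonneg ha h2
    have h5 : 0 < 1 - a := by linarith
    have := neg_log_one_sub_le h4 h3
    refine this.trans ?_
    rw [div_le_iff₀ (by linarith : (0:ℝ) < 1 - a * q ^ n), div_mul_eq_mul_div, div_mul_eq_mul_div,
      le_div_iff₀ h5]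
    nlinarith [mul_le_mul_of_nonneg_left hle h4]

noncomputable def S (q y : ℝ) : ℝ := ∑' n : ℕ, Real.log (1 - q ^ ((n : ℝ) + y))

lemma one_sub_rpow_pos {q y : ℝ} (hq0 : 0 < q) (hq1 : q < 1) (hy : 0 < y) :
    0 < 1 - q ^ y := by
  have := Real.rpow_lt_one hq0.le hq1 hy; linarith

lemma summable_S {q y : ℝ} (hq0 : 0 < q) (hq1 : q < 1) (hy : 0 < y) :
    Summable (fun n : ℕ => Real.log (1 - q ^ ((n : ℝ) + y))) := by
  refine (summable_log_aux hq0 hq1 (Real.rpow_pos_of_pos hq0 y).le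
    (Real.rpow_lt_one hq0.le hq1 hy)).congr ?_
  intro n
  congr 1
  rw [add_comm ((n:ℝ)) y, Real.rpow_add hq0, Real.rpow_natCast]

lemma qGamma_eq {q y : ℝ} (hq0 : 0 < q) (hq1 : q < 1) (hy : 0 < y) :
    qGamma q y = (1 - q) ^ (1 - y) * Real.exp (S q 1 - S q y) := by
  unfold qGamma
  congr 1
  have hpos : ∀ (c : ℝ), 0 < c → ∀ n : ℕ, 0 < 1 - q ^ ((n : ℝ) + c) := by
    intro c hc n
    exact one_sub_rpow_pos hq0 hq1 (by positivity)
  have h3 := (((summable_S hq0 hq1 one_pos).hasSum.sub (summable_S hq0 hq1 hy).hasSum)).rexp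
  have hfe : (Real.exp ∘ fun n : ℕ =>
      Real.log (1 - q ^ ((n : ℝ) + 1)) - Real.log (1 - q ^ ((n : ℝ) + y))) =
      fun n : ℕ => (1 - q ^ ((n : ℝ) + 1)) / (1 - q ^ ((n : ℝ) + y)) := by
    funext n
    simp only [Function.comp_apply]
    rw [Real.exp_sub, Real.exp_log (hpos 1 one_pos n), Real.exp_log (hpos y hy n)]
  rw [hfe] at h3
  exact h3.tprod_eq

/-- The summand of the logarithm of the square of the key function. -/
noncomputable def ell (q t : ℝ) (n : ℕ) : ℝ :=
  2 * Real.log (1 - t * (q ^ (1/2 : ℝ) * q ^ n)) - Real.log (1 - t * q ^ n)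
    - Real.log (1 - t * (q * q ^ n))

lemma sqrt_facts {q : ℝ} (hq0 : 0 < q) (hq1 : q < 1) :
    0 < q ^ (1/2 : ℝ) ∧ q ^ (1/2 : ℝ) < 1 ∧ q ^ (1/2 : ℝ) * q ^ (1/2 : ℝ) = q := by
  refine ⟨Real.rpow_pos_of_pos hq0 _, Real.rpow_lt_one hq0.le hq1 (by norm_num), ?_⟩
  rw [← Real.rpow_add hq0]
  norm_num

lemma key_poly {s p u v : ℝ} (hs0 : 0 < s) (hs1 : s < 1) (hp0 : 0 < p) (hp1 : p ≤ 1)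
    (hu : 0 ≤ u) (huv : u < v) (hv : v < 1) :
    (1 - u * (s * p)) ^ 2 * ((1 - v * p) * (1 - v * (s * s * p))) <
      (1 - v * (s * p)) ^ 2 * ((1 - u * p) * (1 - u * (s * s * p))) := by
  have key : (1 - v * (s * p)) ^ 2 * ((1 - u * p) * (1 - u * (s * s * p)))
      - (1 - u * (s * p)) ^ 2 * ((1 - v * p) * (1 - v * (s * s * p)))
      = (v - u) * (p * (1 - s) ^ 2) * (1 - u * v * (s * p) ^ 2) := by ring
  have h1 : 0 < v - u := by linarith
  have h2 : 0 < p * (1 - s) ^ 2 := mul_pos hp0 (pow_pos (by linarith) 2)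
  have hsp : 0 < s * p := by positivity
  have hsp1 : s * p ≤ 1 := by nlinarith
  have hv0 : 0 ≤ v := le_trans hu huv.le
  have huv1 : u * v < 1 := by nlinarith
  have hsq : (s * p) ^ 2 ≤ 1 := by nlinarith
  have h3 : u * v * (s * p) ^ 2 < 1 := by nlinarith [mul_nonneg hu hv0, sq_nonneg (s * p)]
  have hprod : 0 < (v - u) * (p * (1 - s) ^ 2) * (1 - u * v * (s * p) ^ 2) :=
    mul_pos (mul_pos h1 h2) (by linarith)
  linarith [key, hprod]

/-- positivity of the linear factors -/
lemma lin_pos {t c : ℝ} (ht0 : 0 ≤ t) (ht1 : t < 1) (hc0 : 0 < c) (hc1 : c ≤ 1) :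
    0 < 1 - t * c := by nlinarith

lemma ell_strictMono {q : ℝ} (hq0 : 0 < q) (hq1 : q < 1) {t1 t2 : ℝ} (ht1 : 0 ≤ t1)
    (h12 : t1 < t2) (ht2 : t2 < 1) (n : ℕ) : ell q t1 n < ell q t2 n := by
  obtain ⟨hs0, hs1, hss⟩ := sqrt_facts hq0 hq1
  set s := q ^ (1/2 : ℝ) with hs
  have hp0 : 0 < q ^ n := pow_pos hq0 n
  have hp1 : q ^ n ≤ 1 := pow_le_one₀ hq0.le hq1.le
  have hq' : q * q ^ n = s * s * q ^ n := by rw [hss]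
  have hsp0 : 0 < s * q ^ n := by positivity
  have hsp1 : s * q ^ n ≤ 1 := by nlinarith
  have hqp0 : 0 < q * q ^ n := by positivity
  have hqp1 : q * q ^ n ≤ 1 := by nlinarith
  have ht1' : t1 < 1 := lt_trans h12 ht2
  have ht2' : 0 ≤ t2 := le_trans ht1 h12.le
  -- all six linear factors positive
  have A1 := lin_pos ht1 ht1' hsp0 hsp1
  have A2 := lin_pos ht2' ht2 hsp0 hsp1
  have B1 := lin_pos ht1 ht1' hp0 hp1
  have B2 := lin_pos ht2' ht2 hp0 hp1
  have C1 := lin_pos ht1 ht1' hqp0 hqp1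
  have C2 := lin_pos ht2' ht2 hqp0 hqp1
  -- rewrite ell as log of a quotient
  have hlog : ∀ t : ℝ, 0 ≤ t → t < 1 → ell q t n =
      Real.log ((1 - t * (s * q ^ n)) ^ 2 / ((1 - t * q ^ n) * (1 - t * (q * q ^ n)))) := by
    intro t ht ht'
    have hA := lin_pos ht ht' hsp0 hsp1
    have hB := lin_pos ht ht' hp0 hp1
    have hC := lin_pos ht ht' hqp0 hqp1
    rw [Real.log_div (by positivity) (by positivity), Real.log_mul (ne_of_gt hB) (ne_of_gt hC),
      Real.log_pow]
    unfold ell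
    push_cast
    ring
  rw [hlog t1 ht1 ht1', hlog t2 ht2' ht2]
  apply Real.log_lt_log (by positivity)
  rw [div_lt_div_iff₀ (by positivity) (by positivity)]
  have := key_poly hs0 hs1 hp0 hp1 ht1 h12 ht2
  rw [hq']
  nlinarith [this]

lemma ell_zero {q : ℝ} (n : ℕ) : ell q 0 n = 0 := by simp [ell]

lemma ell_nonneg {q : ℝ} (hq0 : 0 < q) (hq1 : q < 1) {t : ℝ} (ht0 : 0 ≤ t) (ht1 : t < 1)
    (n : ℕ) : 0 ≤ ell q t n := by
  rcases eq_or_lt_of_le ht0 with h | h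
  · rw [← h, ell_zero]
  · rw [← ell_zero (q := q) n]
    exact (ell_strictMono hq0 hq1 le_rfl h ht1 n).le

lemma ell_le {q : ℝ} (hq0 : 0 < q) (hq1 : q < 1) {t : ℝ} (ht0 : 0 ≤ t) (ht1 : t < 1)
    (n : ℕ) : ell q t n ≤ 2 * t / (1 - t) * q ^ n := by
  obtain ⟨hs0, hs1, hss⟩ := sqrt_facts hq0 hq1
  set s := q ^ (1/2 : ℝ) with hs
  have hp0 : 0 < q ^ n := pow_pos hq0 n
  have hp1 : q ^ n ≤ 1 := pow_le_one₀ hq0.le hq1.le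
  have ht' : 0 < 1 - t := by linarith
  have h1 : Real.log (1 - t * (s * q ^ n)) ≤ 0 := by
    apply Real.log_nonpos
    · have := lin_pos ht0 ht1 (by positivity : 0 < s * q ^ n) (by nlinarith)
      linarith
    · nlinarith [mul_nonneg ht0 (by positivity : (0:ℝ) ≤ s * q ^ n)]
  have h2 : -Real.log (1 - t * q ^ n) ≤ t * q ^ n / (1 - t) := by
    have hu : t * q ^ n < 1 := by nlinarith
    refine (neg_log_one_sub_le (by positivity) hu).trans ?_
    apply div_le_div_of_nonneg_left (by positivity) ht' (by nlinarith)
  have h3 : -Real.log (1 - t * (q * q ^ n)) ≤ t * (q * q ^ n) / (1 - t) := by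
    have hqp1 : q * q ^ n ≤ 1 := by nlinarith
    have hu : t * (q * q ^ n) < 1 := by nlinarith
    refine (neg_log_one_sub_le (by positivity) hu).trans ?_
    apply div_le_div_of_nonneg_left (by positivity) ht' (by nlinarith)
  have h4 : t * q ^ n / (1 - t) + t * (q * q ^ n) / (1 - t) ≤ 2 * t / (1 - t) * q ^ n := by
    have he : 2 * t / (1 - t) * q ^ n - (t * q ^ n / (1 - t) + t * (q * q ^ n) / (1 - t))
        = t * q ^ n * (1 - q) / (1 - t) := by
      field_simp
      ring
    have hpos : 0 ≤ t * q ^ n * (1 - q) / (1 - t) :=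
      div_nonneg (mul_nonneg (mul_nonneg ht0 hp0.le) (by linarith)) ht'.le
    linarith
  unfold ell
  linarith

lemma summable_ell {q : ℝ} (hq0 : 0 < q) (hq1 : q < 1) {t : ℝ} (ht0 : 0 ≤ t) (ht1 : t < 1) :
    Summable (fun n : ℕ => ell q t n) :=
  Summable.of_nonneg_of_le (ell_nonneg hq0 hq1 ht0 ht1) (ell_le hq0 hq1 ht0 ht1)
    (Summable.mul_left _ (summable_geometric_of_lt_one hq0.le hq1))

noncomputable def M (q t : ℝ) : ℝ := ∑' n : ℕ, ell q t n

lemma M_zero {q : ℝ} : M q 0 = 0 := by simp [M, ell_zero]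

lemma M_lt {q : ℝ} (hq0 : 0 < q) (hq1 : q < 1) {t1 t2 : ℝ} (ht1 : 0 ≤ t1) (h12 : t1 < t2)
    (ht2 : t2 < 1) : M q t1 < M q t2 :=
  Summable.tsum_lt_tsum (fun n => (ell_strictMono hq0 hq1 ht1 h12 ht2 n).le)
    (ell_strictMono hq0 hq1 ht1 h12 ht2 0)
    (summable_ell hq0 hq1 ht1 (lt_trans h12 ht2)) (summable_ell hq0 hq1 (le_trans ht1 h12.le) ht2)

lemma M_pos {q : ℝ} (hq0 : 0 < q) (hq1 : q < 1) {t : ℝ} (ht0 : 0 < t) (ht1 : t < 1) :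
    0 < M q t := by
  have := M_lt hq0 hq1 le_rfl ht0 ht1
  rwa [M_zero] at this

lemma M_le {q : ℝ} (hq0 : 0 < q) (hq1 : q < 1) {t : ℝ} (ht0 : 0 ≤ t) (ht1 : t < 1) :
    M q t ≤ 2 * t / (1 - t) * (1 - q)⁻¹ := by
  have h := Summable.tsum_le_tsum (ell_le hq0 hq1 ht0 ht1) (summable_ell hq0 hq1 ht0 ht1)
    (Summable.mul_left _ (summable_geometric_of_lt_one hq0.le hq1))
  rwa [tsum_mul_left, tsum_geometric_of_lt_one hq0.le hq1] at h

lemma S_shift {q : ℝ} (x c : ℝ) (hq0 : 0 < q) :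
    S q (x + c) = ∑' n : ℕ, Real.log (1 - q ^ x * (q ^ c * q ^ n)) := by
  unfold S
  apply tsum_congr
  intro n
  rw [show (n : ℝ) + (x + c) = x + (c + (n : ℝ)) by ring, Real.rpow_add hq0,
    Real.rpow_add hq0, Real.rpow_natCast]

lemma M_formula {q t : ℝ} (hq0 : 0 < q) (hq1 : q < 1) (ht0 : 0 ≤ t) (ht1 : t < 1) :
    (1/2) * M q t = -(1/2) * Real.log (1 - t)
      + (∑' n : ℕ, Real.log (1 - t * (q ^ (1/2 : ℝ) * q ^ n)))
      - (∑' n : ℕ, Real.log (1 - t * (q * q ^ n))) := by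
  obtain ⟨hs0, hs1, hss⟩ := sqrt_facts hq0 hq1
  set s := q ^ (1/2 : ℝ) with hs
  have hts : 0 ≤ t * s := by positivity
  have hts1 : t * s < 1 := by nlinarith
  have htq : 0 ≤ t * q := by positivity
  have htq1 : t * q < 1 := by nlinarith
  have hA : Summable (fun n : ℕ => Real.log (1 - t * (s * q ^ n))) :=
    (summable_log_aux hq0 hq1 hts hts1).congr (fun n => by rw [mul_assoc])
  have hB : Summable (fun n : ℕ => Real.log (1 - t * (q * q ^ n))) :=
    (summable_log_aux hq0 hq1 htq htq1).congr (fun n => by rw [mul_assoc])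
  have hC : Summable (fun n : ℕ => Real.log (1 - t * q ^ n)) :=
    summable_log_aux hq0 hq1 ht0 ht1
  have hC_split : (∑' n : ℕ, Real.log (1 - t * q ^ n))
      = Real.log (1 - t) + ∑' n : ℕ, Real.log (1 - t * (q * q ^ n)) := by
    rw [Summable.tsum_eq_zero_add hC]
    congr 1
    · simp
    · apply tsum_congr
      intro n
      rw [pow_succ']
  have hM : M q t = ∑' n : ℕ,
      ((2 * Real.log (1 - t * (s * q ^ n)) - Real.log (1 - t * q ^ n))
        - Real.log (1 - t * (q * q ^ n))) := rfl
  rw [hM, Summable.tsum_sub ((hA.mul_left 2).sub hC) hB, Summable.tsum_sub (hA.mul_left 2) hC, tsum_mul_left,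
    hC_split]
  ring

lemma F_eq {q x : ℝ} (hq0 : 0 < q) (hq1 : q < 1) (hx : 0 < x) :
    qBracket q x ^ (-(1/2) : ℝ) * qGamma q (x + 1) / qGamma q (x + 1/2)
      = Real.exp ((1/2) * M q (q ^ x)) := by
  have hq' : 0 < 1 - q := by linarith
  have ht0 : 0 < q ^ x := Real.rpow_pos_of_pos hq0 x
  have ht1 : q ^ x < 1 := Real.rpow_lt_one hq0.le hq1 hx
  have h1t : 0 < 1 - q ^ x := by linarith
  have hbr : qBracket q x ^ (-(1/2) : ℝ)
      = Real.exp ((Real.log (1 - q ^ x) - Real.log (1 - q)) * (-(1/2))) := by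
    rw [show qBracket q x = (1 - q ^ x) / (1 - q) from rfl,
      Real.rpow_def_of_pos (by positivity), Real.log_div (ne_of_gt h1t) (ne_of_gt hq')]
  have hg1 : qGamma q (x + 1)
      = Real.exp (Real.log (1 - q) * (1 - (x + 1)) + (S q 1 - S q (x + 1))) := by
    rw [qGamma_eq hq0 hq1 (by linarith), Real.rpow_def_of_pos hq', Real.exp_add]
  have hg2 : qGamma q (x + 1/2)
      = Real.exp (Real.log (1 - q) * (1 - (x + 1/2)) + (S q 1 - S q (x + 1/2))) := by
    rw [qGamma_eq hq0 hq1 (by linarith), Real.rpow_def_of_pos hq', Real.exp_add]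
  rw [hbr, hg1, hg2, ← Real.exp_add, ← Real.exp_sub]
  congr 1
  have e1 : S q (x + 1) = ∑' n : ℕ, Real.log (1 - q ^ x * (q * q ^ n)) := by
    rw [S_shift x 1 hq0]
    simp [Real.rpow_one]
  have e2 : S q (x + 1/2) = ∑' n : ℕ, Real.log (1 - q ^ x * (q ^ (1/2 : ℝ) * q ^ n)) := by
    rw [S_shift x (1/2) hq0]
  rw [M_formula hq0 hq1 ht0.le ht1, e1, e2]
  ring


lemma M_tendsto {q : ℝ} (hq0 : 0 < q) (hq1 : q < 1) :
    Tendsto (fun x : ℝ => M q (q ^ x)) atTop (nhds 0) := by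
  have hqx : Tendsto (fun x : ℝ => q ^ x) atTop (nhds 0) :=
    tendsto_rpow_atTop_of_base_lt_one q (by linarith) hq1
  have h1 : Tendsto (fun t : ℝ => 2 * t) (nhds 0) (nhds 0) := by
    simpa using (tendsto_id (α := ℝ)).const_mul (2 : ℝ) |>.mono_left (le_refl (nhds 0))
  have h2 : Tendsto (fun t : ℝ => 1 - t) (nhds (0:ℝ)) (nhds 1) := by
    have : Continuous (fun t : ℝ => 1 - t) := continuous_const.sub continuous_id
    simpa using this.tendsto (0 : ℝ)
  have h3 : Tendsto (fun t : ℝ => 2 * t / (1 - t)) (nhds 0) (nhds 0) := by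
    have := h1.div h2 one_ne_zero
    simp only [zero_div] at this
    exact this
  have h4 : Tendsto (fun t : ℝ => 2 * t / (1 - t) * (1 - q)⁻¹) (nhds 0) (nhds 0) := by
    simpa using h3.mul_const (1 - q)⁻¹
  have hg : Tendsto (fun x : ℝ => 2 * (q ^ x) / (1 - q ^ x) * (1 - q)⁻¹) atTop (nhds 0) :=
    h4.comp hqx
  refine tendsto_of_tendsto_of_tendsto_of_le_of_le' tendsto_const_nhds hg ?_ ?_
  · filter_upwards [eventually_gt_atTop (0:ℝ)] with x hx
    exact (M_pos hq0 hq1 (Real.rpow_pos_of_pos hq0 x) (Real.rpow_lt_one hq0.le hq1 hx)).le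
  · filter_upwards [eventually_gt_atTop (0:ℝ)] with x hx
    exact M_le hq0 hq1 (Real.rpow_pos_of_pos hq0 x).le (Real.rpow_lt_one hq0.le hq1 hx)

end QGammaAux


open QGammaAux Real Filter in
theorem qGammaRatio_F (q : ℝ) (hq : q ∈ Set.Ioo (0 : ℝ) 1) :
    StrictAntiOn (fun x : ℝ => qBracket q x ^ (-(1 / 2) : ℝ) * qGamma q (x + 1) / qGamma q (x + 1 / 2))
      (Set.Ioi (0 : ℝ)) ∧
    Filter.Tendsto (fun x : ℝ => qBracket q x ^ (-(1 / 2) : ℝ) * qGamma q (x + 1) / qGamma q (x + 1 / 2))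
      Filter.atTop (nhds 1) ∧
    ∀ x : ℝ, 0 < x →
      1 < qBracket q x ^ (-(1 / 2) : ℝ) * qGamma q (x + 1) / qGamma q (x + 1 / 2) := by
  obtain ⟨hq0, hq1⟩ := hq
  refine ⟨?_, ?_, ?_⟩
  · intro x1 hx1 x2 hx2 h
    simp only [Set.mem_Ioi] at hx1 hx2
    dsimp only
    rw [F_eq hq0 hq1 hx1, F_eq hq0 hq1 hx2]
    apply Real.exp_lt_exp.mpr
    have := M_lt hq0 hq1 (Real.rpow_pos_of_pos hq0 x2).le
      (Real.rpow_lt_rpow_of_exponent_gt hq0 hq1 h) (Real.rpow_lt_one hq0.le hq1 hx1)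
    linarith
  · have hM := M_tendsto hq0 hq1
    have h1 : Tendsto (fun x : ℝ => (1/2 : ℝ) * M q (q ^ x)) atTop (nhds 0) := by
      simpa using hM.const_mul (1/2 : ℝ)
    have h2 : Tendsto (fun x : ℝ => Real.exp ((1/2 : ℝ) * M q (q ^ x))) atTop (nhds 1) := by
      have := (Real.continuous_exp.tendsto 0).comp h1
      simpa [Function.comp_def] using this
    apply h2.congr'
    filter_upwards [eventually_gt_atTop (0:ℝ)] with x hx
    exact (F_eq hq0 hq1 hx).symm
  · intro x hx
    rw [F_eq hq0 hq1 hx, Real.one_lt_exp_iff]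
    have := M_pos hq0 hq1 (Real.rpow_pos_of_pos hq0 x) (Real.rpow_lt_one hq0.le hq1 hx)
    linarith
end

section
/- Let q ∈ (0,1) and x > 0. Then ψ_q(x+1) - ψ_q(x + 1/2) ≥ -(1/2) · (q^{x+1/2} ln q)/(1 - q^{x+1/2}). -/
open Real

lemma qpow_lt_one' (q : ℝ) (hq0 : 0 < q) (hq1 : q < 1) {t : ℝ} (ht : 0 < t) :
    q ^ t < 1 := Real.rpow_lt_one hq0.le hq1 ht

/-- Summability of the series in `qPsi`. -/
lemma qPsi_summable (q : ℝ) (hq0 : 0 < q) (hq1 : q < 1) {c : ℝ} (hc : 0 < c) :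
    Summable (fun n : ℕ => q ^ ((n : ℝ) + c) / (1 - q ^ ((n : ℝ) + c))) := by
  have hd : ∀ n : ℕ, 0 < 1 - q ^ ((n : ℝ) + c) := by
    intro n
    have : q ^ ((n : ℝ) + c) < 1 := qpow_lt_one' q hq0 hq1 (by positivity)
    linarith
  have hM : 0 < 1 - q ^ c := by
    have := qpow_lt_one' q hq0 hq1 hc; linarith
  have hsum : Summable (fun n : ℕ => (q ^ c / (1 - q ^ c)) * q ^ n) :=
    (summable_geometric_of_lt_one hq0.le hq1).mul_left _
  refine Summable.of_nonneg_of_le (fun n => ?_) (fun n => ?_) hsum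
  · have := (Real.rpow_pos_of_pos hq0 ((n:ℝ)+c)).le
    exact div_nonneg this (hd n).le
  · have h1 : q ^ ((n : ℝ) + c) = q ^ n * q ^ c := by
      rw [Real.rpow_add hq0, Real.rpow_natCast]
    have h2 : 1 - q ^ c ≤ 1 - q ^ ((n : ℝ) + c) := by
      rw [h1]
      have hqn : q ^ n ≤ 1 := pow_le_one₀ hq0.le hq1.le
      nlinarith [Real.rpow_pos_of_pos hq0 c]
    have hdn : 0 < 1 - q ^ n * q ^ c := h1 ▸ hd n
    rw [h1, div_le_iff₀ hdn, div_mul_eq_mul_div, div_mul_eq_mul_div, le_div_iff₀ hM]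
    have hqn : q ^ n ≤ 1 := pow_le_one₀ hq0.le hq1.le
    nlinarith [Real.rpow_pos_of_pos hq0 c, pow_pos hq0 n, hdn, hM,
      mul_pos (pow_pos hq0 n) (Real.rpow_pos_of_pos hq0 c)]

/-- Midpoint convexity-type inequality for `t ↦ q^t/(1-q^t)`. -/
lemma qf_midpoint (q : ℝ) (hq0 : 0 < q) (hq1 : q < 1) {t : ℝ} (ht : 0 < t) :
    q ^ (t + 1/2) / (1 - q ^ (t + 1/2)) ≤
      (q ^ t / (1 - q ^ t) + q ^ (t + 1) / (1 - q ^ (t + 1))) / 2 := by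
  set u := q ^ t with hu
  set r := q ^ (1/2 : ℝ) with hr
  have hu0 : 0 < u := Real.rpow_pos_of_pos hq0 t
  have hu1 : u < 1 := qpow_lt_one' q hq0 hq1 ht
  have hr0 : 0 < r := Real.rpow_pos_of_pos hq0 _
  have hr1 : r < 1 := qpow_lt_one' q hq0 hq1 (by norm_num)
  have hrq : r * r = q := by
    rw [hr, ← Real.rpow_add hq0]; norm_num
  have e1 : q ^ (t + 1/2) = u * r := by rw [Real.rpow_add hq0]
  have e2 : q ^ (t + 1) = u * (r * r) := by
    rw [Real.rpow_add hq0, Real.rpow_one, hrq]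
  rw [e1, e2]
  have h1 : 0 < 1 - u := by linarith
  have h2 : 0 < 1 - u * r := by nlinarith
  have h3 : 0 < 1 - u * (r * r) := by nlinarith
  have key : (u / (1 - u) + u * (r * r) / (1 - u * (r * r))) / 2 - u * r / (1 - u * r)
      = u * (1 - r) ^ 2 * (1 + r * u) /
        (2 * ((1 - u) * ((1 - u * r) * (1 - u * (r * r))))) := by
    have h3' : (1 - u * r ^ 2) ≠ 0 := by rw [sq]; exact h3.ne'
    field_simp
    ring
  have hnum : 0 ≤ u * (1 - r) ^ 2 * (1 + r * u) := by
    apply mul_nonneg (mul_nonneg hu0.le (sq_nonneg _))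
    nlinarith
  have hden : 0 < 2 * ((1 - u) * ((1 - u * r) * (1 - u * (r * r)))) := by positivity
  nlinarith [div_nonneg hnum hden.le, key]

/-- The q-analogue of the digamma function:
    `ψ_q(x) = -log(1-q) + (log q) · ∑_{n=0}^∞ q^(n+x)/(1-q^(n+x))`. -/
noncomputable def qPsi (q x : ℝ) : ℝ :=
  -Real.log (1 - q) + Real.log q * ∑' n : ℕ, q ^ ((n : ℝ) + x) / (1 - q ^ ((n : ℝ) + x))

theorem qPsi_diff_ge (q x : ℝ) (hq : q ∈ Set.Ioo (0 : ℝ) 1) (hx : 0 < x) :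
    qPsi q (x + 1) - qPsi q (x + 1 / 2) ≥
      -(1 / 2) * (q ^ (x + 1 / 2) * Real.log q / (1 - q ^ (x + 1 / 2))) := by
  obtain ⟨hq0, hq1⟩ := hq
  have hlq : Real.log q < 0 := Real.log_neg hq0 hq1
  set f : ℝ → ℝ := fun t => q ^ t / (1 - q ^ t) with hf
  set S : ℝ → ℝ := fun c => ∑' n : ℕ, f ((n : ℝ) + c) with hS
  have hsum : ∀ c : ℝ, 0 < c → Summable (fun n : ℕ => f ((n : ℝ) + c)) :=
    fun c hc => qPsi_summable q hq0 hq1 hc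
  -- index shift: S (x + 1/2) = f (x + 1/2) + S (x + 3/2)
  have hshift : S (x + 1/2) = f (x + 1/2) + S (x + 3/2) := by
    have h := Summable.tsum_eq_zero_add (hsum (x + 1/2) (by linarith))
    simp only [Nat.cast_zero, zero_add] at h
    rw [hS]
    simp only
    rw [h]
    congr 1
    apply tsum_congr
    intro n
    congr 1
    push_cast
    ring
  -- termwise midpoint bound
  have hterm : S (x + 1) ≤ (S (x + 1/2) + S (x + 3/2)) / 2 := by
    have h1 : S (x + 1) ≤ ∑' n : ℕ,
        (f ((n : ℝ) + (x + 1/2)) + f ((n : ℝ) + (x + 3/2))) / 2 := by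
      apply Summable.tsum_le_tsum
      · intro n
        have h := qf_midpoint q hq0 hq1 (t := (n : ℝ) + (x + 1/2)) (by positivity)
        have e1 : (n : ℝ) + (x + 1/2) + 1/2 = (n : ℝ) + (x + 1) := by ring
        have e2 : (n : ℝ) + (x + 1/2) + 1 = (n : ℝ) + (x + 3/2) := by ring
        rw [e1, e2] at h
        exact h
      · exact hsum (x + 1) (by linarith)
      · exact (((hsum (x + 1/2) (by linarith)).add (hsum (x + 3/2) (by linarith))).div_const 2)
    rw [tsum_div_const,
      Summable.tsum_add (hsum (x + 1/2) (by linarith)) (hsum (x + 3/2) (by linarith))] at h1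
    exact h1
  -- combine
  have hkey : S (x + 1) ≤ S (x + 1/2) - f (x + 1/2) / 2 := by
    have h : S (x + 3/2) = S (x + 1/2) - f (x + 1/2) := by linarith [hshift]
    rw [h] at hterm
    linarith
  have hfx : 0 < f (x + 1/2) := by
    have h1 : q ^ (x + 1/2) < 1 := qpow_lt_one' q hq0 hq1 (by linarith)
    have h2 : 0 < q ^ (x + 1/2) := Real.rpow_pos_of_pos hq0 _
    rw [hf]
    exact div_pos h2 (by linarith)
  have hgoal : Real.log q * S (x + 1) - Real.log q * S (x + 1/2) ≥
      -(1/2) * (Real.log q * f (x + 1/2)) := by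
    nlinarith [hkey, hlq]
  unfold qPsi
  have hrw : q ^ (x + 1/2) * Real.log q / (1 - q ^ (x + 1/2))
      = Real.log q * f (x + 1/2) := by
    rw [hf]; ring
  rw [hrw]
  simp only [hS, hf] at hgoal
  linarith [hgoal]
end
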